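/- arXiv:2406.04274 — 7 statements merged into one kernel-verified Lean document; each statement's English description precedes it below -/
import Mathlib

section
/- Let F be a finite class of functions f: X×Y → ℝ and define the coverage constant 𝔠 = sqrt( sup_{f∈F} E_{x~ρ, y1~π*(·|x), y2~π_ref(·|x)}[Z_f(x,y1,y2)]² / E_{x~ρ, y1,y2~π_ref(·|x)}[Z_f(x,y1,y2)²] ), where Z_f(x,y1,y2) = r*(x,y1) − r*(x,y2) − f(x,y1) + f(x,y2), with the convention 0/0 = 0. If π_ref(y|x) > 0 for all x, y, then 𝔠 ≤ sup_{x,y} π*(y|x)/π_ref(y|x). -/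
open Finset

/-- The coverage constant
`𝔠 = sqrt( sup_{f∈F} E_{ρ, y1~π*, y2~π_ref}[Z_f]² / E_{ρ, y1,y2~π_ref}[Z_f²] )`
(convention `0/0 = 0`, which is Lean's division convention) is bounded by the
density-ratio bound: if `π_ref(y|x) > 0` everywhere, then
`𝔠 ≤ sup_{x,y} π*(y|x)/π_ref(y|x)`. -/
theorem coverage_le_density_ratio {X Y : Type*} [Fintype X] [Fintype Y]
    [Nonempty X] [Nonempty Y]
    (ρ : X → ℝ) (hρ0 : ∀ x, 0 ≤ ρ x) (hρ1 : ∑ x, ρ x = 1)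
    (rstar : X → Y → ℝ)
    (πstar πref : X → Y → ℝ)
    (hπstar0 : ∀ x y, 0 ≤ πstar x y) (hπstar1 : ∀ x, ∑ y, πstar x y = 1)
    (hπref0 : ∀ x y, 0 < πref x y) (hπref1 : ∀ x, ∑ y, πref x y = 1)
    (FF : Finset (X → Y → ℝ)) (hFF : FF.Nonempty) :
    let Z : (X → Y → ℝ) → X → Y → Y → ℝ := fun f x y1 y2 =>
      rstar x y1 - rstar x y2 - f x y1 + f x y2;
    let num : (X → Y → ℝ) → ℝ := fun f =>
      ∑ x, ρ x * ∑ y1, ∑ y2, πstar x y1 * πref x y2 * Z f x y1 y2;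
    let den : (X → Y → ℝ) → ℝ := fun f =>
      ∑ x, ρ x * ∑ y1, ∑ y2, πref x y1 * πref x y2 * (Z f x y1 y2) ^ 2;
    let C : ℝ := Real.sqrt (FF.sup' hFF fun f => (num f) ^ 2 / den f);
    C ≤ (Finset.univ : Finset (X × Y)).sup' Finset.univ_nonempty
          (fun p => πstar p.1 p.2 / πref p.1 p.2) := by
  intro Z num den C
  set M : ℝ := (Finset.univ : Finset (X × Y)).sup' Finset.univ_nonempty
      (fun p => πstar p.1 p.2 / πref p.1 p.2) with hMdef
  have hM : ∀ x y, πstar x y / πref x y ≤ M := fun x y =>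
    Finset.le_sup' (f := fun p : X × Y => πstar p.1 p.2 / πref p.1 p.2)
      (Finset.mem_univ (x, y))
  have hM0 : 0 ≤ M := by
    obtain x := Classical.arbitrary X
    obtain y := Classical.arbitrary Y
    exact le_trans (div_nonneg (hπstar0 x y) (hπref0 x y).le) (hM x y)
  have key : ∀ f ∈ FF, (num f) ^ 2 / den f ≤ M ^ 2 := by
    intro f _
    -- weight function
    set s : X × Y × Y → ℝ := fun p => ρ p.1 * (πref p.1 p.2.1 * πref p.1 p.2.2) with hs
    have hs0 : ∀ p, 0 ≤ s p := fun p =>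
      mul_nonneg (hρ0 _) (mul_nonneg (hπref0 _ _).le (hπref0 _ _).le)
    set a : X × Y × Y → ℝ := fun p =>
      Real.sqrt (s p) * (πstar p.1 p.2.1 / πref p.1 p.2.1) with ha
    set b : X × Y × Y → ℝ := fun p => Real.sqrt (s p) * Z f p.1 p.2.1 p.2.2 with hb
    have hnum : num f = ∑ p : X × Y × Y, a p * b p := by
      simp only [Fintype.sum_prod_type, num, Finset.mul_sum]
      refine Finset.sum_congr rfl fun x _ => Finset.sum_congr rfl fun y1 _ =>
        Finset.sum_congr rfl fun y2 _ => ?_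
      have h1 := Real.mul_self_sqrt (hs0 (x, y1, y2))
      have h2 : πref x y1 ≠ 0 := (hπref0 x y1).ne'
      have habq : a (x, y1, y2) * b (x, y1, y2)
          = (Real.sqrt (s (x, y1, y2)) * Real.sqrt (s (x, y1, y2)))
            * (πstar x y1 / πref x y1 * Z f x y1 y2) := by
        simp only [ha, hb]; ring
      rw [habq, h1]
      simp only [hs]
      have h3 : πstar x y1 / πref x y1 * πref x y1 = πstar x y1 :=
        div_mul_cancel₀ _ h2
      linear_combination (-(ρ x * πref x y2 * Z f x y1 y2)) * h3
    have hb2 : den f = ∑ p : X × Y × Y, b p ^ 2 := by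
      simp only [Fintype.sum_prod_type, den, Finset.mul_sum]
      refine Finset.sum_congr rfl fun x _ => Finset.sum_congr rfl fun y1 _ =>
        Finset.sum_congr rfl fun y2 _ => ?_
      have h1 := Real.sq_sqrt (hs0 (x, y1, y2))
      simp only [hb, mul_pow, h1]; simp only [hs]; ring
    have ha2 : ∑ p : X × Y × Y, a p ^ 2 ≤ M ^ 2 := by
      have hle : ∀ p : X × Y × Y, a p ^ 2 ≤ s p * M ^ 2 := by
        intro p
        have h1 := Real.sq_sqrt (hs0 p)
        have hw0 : 0 ≤ πstar p.1 p.2.1 / πref p.1 p.2.1 :=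
          div_nonneg (hπstar0 _ _) (hπref0 _ _).le
        have hw2 : (πstar p.1 p.2.1 / πref p.1 p.2.1) ^ 2 ≤ M ^ 2 :=
          pow_le_pow_left₀ hw0 (hM _ _) 2
        calc a p ^ 2 = s p * (πstar p.1 p.2.1 / πref p.1 p.2.1) ^ 2 := by
              simp only [ha, mul_pow, h1]
          _ ≤ s p * M ^ 2 := mul_le_mul_of_nonneg_left hw2 (hs0 p)
      calc ∑ p : X × Y × Y, a p ^ 2 ≤ ∑ p : X × Y × Y, s p * M ^ 2 :=
            Finset.sum_le_sum fun p _ => hle p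
        _ = (∑ p : X × Y × Y, s p) * M ^ 2 := by rw [← Finset.sum_mul]
        _ = M ^ 2 := by
            have : ∑ p : X × Y × Y, s p = 1 := by
              simp only [Fintype.sum_prod_type, hs]
              simp only [← Finset.mul_sum, hπref1, mul_one, hρ1]
            rw [this, one_mul]
    have hCS : (num f) ^ 2 ≤ M ^ 2 * den f := by
      rw [hnum, hb2]
      calc (∑ p : X × Y × Y, a p * b p) ^ 2
          ≤ (∑ p : X × Y × Y, a p ^ 2) * ∑ p : X × Y × Y, b p ^ 2 :=
            Finset.sum_mul_sq_le_sq_mul_sq _ _ _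
        _ ≤ M ^ 2 * ∑ p : X × Y × Y, b p ^ 2 :=
            mul_le_mul_of_nonneg_right ha2
              (Finset.sum_nonneg fun p _ => sq_nonneg _)
    have hden0 : 0 ≤ den f := by
      rw [hb2]; exact Finset.sum_nonneg fun p _ => sq_nonneg _
    rcases eq_or_lt_of_le hden0 with h | h
    · have : (num f) ^ 2 = 0 := le_antisymm (by simpa [← h] using hCS) (sq_nonneg _)
      rw [this, zero_div]
      exact sq_nonneg M
    · rw [div_le_iff₀ h]
      linarith [hCS]
  have hsup : FF.sup' hFF (fun f => (num f) ^ 2 / den f) ≤ M ^ 2 :=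
    Finset.sup'_le _ _ key
  calc C ≤ Real.sqrt (M ^ 2) := Real.sqrt_le_sqrt hsup
    _ = M := Real.sqrt_sq hM0
end

section
/- Let Y be a finite set, μ a probability distribution on Y with μ(y) > 0 for all y, η > 0, and f_1,…,f_T: Y → ℝ. Define ℓ(π) = η·D_KL(π || μ), π_1 = μ, and for t ≥ 1 let π_{t+1}(y) ∝ π_t(y)·exp(f_t(y)/η). Then for every probability distribution π on Y: Σ_{t=1}^T ⟨π, f_t⟩ − ℓ(π) ≤ Σ_{t=1}^T ⟨π_{t+1}, f_t⟩ − ℓ(π_1), where ⟨p, f⟩ = Σ_{y∈Y} p(y)·f(y). -/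
open Finset

lemma gibbs_aux {Y : Type*} [Fintype Y] (p q : Y → ℝ)
    (hp : ∀ y, 0 ≤ p y) (hp1 : ∑ y, p y = 1) (hq : ∀ y, 0 < q y) :
    ∑ y, p y * Real.log (q y / p y) ≤ Real.log (∑ y, q y) := by
  have hne : (Finset.univ : Finset Y).Nonempty :=
    Finset.nonempty_of_sum_ne_zero (f := p) (by rw [hp1]; norm_num)
  have hZ : 0 < ∑ y, q y := Finset.sum_pos (fun y _ => hq y) hne
  have key : ∀ y, p y * Real.log (q y / p y) - p y * Real.log (∑ y, q y)
      ≤ q y / (∑ y, q y) - p y := by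
    intro y
    rcases eq_or_lt_of_le (hp y) with h | h
    · rw [← h]; simpa using div_nonneg (hq y).le hZ.le
    · have hpos : 0 < q y / (p y * (∑ y, q y)) := div_pos (hq y) (mul_pos h hZ)
      have := Real.log_le_sub_one_of_pos hpos
      have heq : Real.log (q y / (p y * (∑ y, q y)))
          = Real.log (q y / p y) - Real.log (∑ y, q y) := by
        rw [Real.log_div (ne_of_gt (hq y)) (mul_pos h hZ).ne',
            Real.log_div (ne_of_gt (hq y)) (ne_of_gt h),
            Real.log_mul (ne_of_gt h) (ne_of_gt hZ)]
        ring
      rw [heq] at this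
      have h2 : p y * (Real.log (q y / p y) - Real.log (∑ y, q y))
          ≤ p y * (q y / (p y * (∑ y, q y)) - 1) :=
        mul_le_mul_of_nonneg_left this (le_of_lt h)
      have h3 : p y * (q y / (p y * (∑ y, q y)) - 1)
          = q y / (∑ y, q y) - p y := by
        field_simp
      nlinarith [h2, h3]
  have hsum := Finset.sum_le_sum (fun y (_ : y ∈ Finset.univ) => key y)
  rw [Finset.sum_sub_distrib, Finset.sum_sub_distrib, ← Finset.sum_mul, hp1,
      ← Finset.sum_div, div_self (ne_of_gt hZ)] at hsum
  linarith

/-- FTRL-style comparison (Lemma "no-regret-1"): with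
`ℓ(π) = η·D_KL(π‖μ)`, `π_1 = μ` and `π_{t+1}(y) ∝ π_t(y)·exp(f_t(y)/η)`
for all `t ≥ 1`, every distribution `π` on `Y` satisfies
`Σ_{t=1}^T ⟨π, f_t⟩ − ℓ(π) ≤ Σ_{t=1}^T ⟨π_{t+1}, f_t⟩ − ℓ(π_1)`. -/
theorem ftrl_comparison {Y : Type*} [Fintype Y]
    (μ : Y → ℝ) (hμ0 : ∀ y, 0 < μ y) (hμ1 : ∑ y, μ y = 1)
    (η : ℝ) (hη : 0 < η) (T : ℕ)
    (f : ℕ → Y → ℝ)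
    (πs : ℕ → Y → ℝ)
    (hinit : πs 1 = μ)
    (hrec : ∀ t, 1 ≤ t → ∀ y,
      πs (t + 1) y = πs t y * Real.exp (f t y / η)
        / ∑ y', πs t y' * Real.exp (f t y' / η)) :
    ∀ π : Y → ℝ, (∀ y, 0 ≤ π y) → (∑ y, π y = 1) →
      (∑ t ∈ Finset.Icc 1 T, ∑ y, π y * f t y)
          - η * ∑ y, π y * Real.log (π y / μ y)
        ≤ (∑ t ∈ Finset.Icc 1 T, ∑ y, πs (t + 1) y * f t y)
          - η * ∑ y, πs 1 y * Real.log (πs 1 y / μ y) := by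
  intro π hπ0 hπ1
  have hne : (Finset.univ : Finset Y).Nonempty :=
    Finset.nonempty_of_sum_ne_zero (f := μ) (by rw [hμ1]; norm_num)
  -- cumulative scores, unnormalized weights, partition function
  set S : ℕ → Y → ℝ := fun t y => ∑ s ∈ Finset.Icc 1 t, f s y with hS
  set g : ℕ → Y → ℝ := fun t y => μ y * Real.exp (S t y / η) with hg
  set Z : ℕ → ℝ := fun t => ∑ y, g t y with hZdef
  have hgpos : ∀ t y, 0 < g t y := fun t y =>
    mul_pos (hμ0 y) (Real.exp_pos _)
  have hZpos : ∀ t, 0 < Z t := fun t =>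
    Finset.sum_pos (fun y _ => hgpos t y) hne
  have hSsucc : ∀ t y, S (t + 1) y = S t y + f (t + 1) y := by
    intro t y
    simp only [hS]
    rw [Finset.sum_Icc_succ_top (Nat.le_add_left 1 t)]
  have hg0 : ∀ y, g 0 y = μ y := by
    intro y; simp [hg, hS]
  have hgsucc : ∀ t y, g (t + 1) y = g t y * Real.exp (f (t + 1) y / η) := by
    intro t y
    simp only [hg]
    rw [hSsucc, add_div, Real.exp_add]
    ring
  have hZ0 : Z 0 = 1 := by
    simp only [hZdef]
    rw [Finset.sum_congr rfl (fun y _ => hg0 y), hμ1]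
  -- closed form for the iterates
  have hps : ∀ t y, πs (t + 1) y = g t y / Z t := by
    intro t
    induction t with
    | zero => intro y; rw [hinit, hg0, hZ0]; simp
    | succ t ih =>
      intro y
      rw [hrec (t + 1) (Nat.le_add_left 1 t) y]
      have hgs : ∀ y', πs (t + 1) y' * Real.exp (f (t + 1) y' / η)
          = g (t + 1) y' / Z t := by
        intro y'
        rw [ih y', hgsucc]
        ring
      rw [hgs y, Finset.sum_congr rfl (fun y' _ => hgs y'), ← Finset.sum_div]
      have hfold : (∑ i, g (t + 1) i) = Z (t + 1) := rfl
      rw [hfold]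
      have h1 := (hZpos t).ne'
      have h2 := (hZpos (t + 1)).ne'
      field_simp
  -- per-step inequality
  have hstep : ∀ t, η * Real.log (Z (t + 1)) - η * Real.log (Z t)
      ≤ ∑ y, πs (t + 1 + 1) y * f (t + 1) y := by
    intro t
    set p : Y → ℝ := fun y => g (t + 1) y / Z (t + 1) with hpdef
    have hp0 : ∀ y, 0 ≤ p y := fun y => (div_pos (hgpos _ y) (hZpos _)).le
    have hp1 : ∑ y, p y = 1 := by
      simp only [hpdef]
      rw [← Finset.sum_div, div_self (hZpos (t + 1)).ne']
    have hterm : ∀ y, πs (t + 1 + 1) y * f (t + 1) y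
        = η * (p y * Real.log (p y / (g t y / Z t)))
          + η * Real.log (Z (t + 1)) * p y - η * Real.log (Z t) * p y := by
      intro y
      have hppos : 0 < p y := div_pos (hgpos _ y) (hZpos _)
      have hf : f (t + 1) y = η * Real.log (g (t + 1) y / g t y) := by
        have hratio : g (t + 1) y / g t y = Real.exp (f (t + 1) y / η) := by
          rw [hgsucc, mul_comm, mul_div_assoc, div_self (hgpos t y).ne', mul_one]
        rw [hratio, Real.log_exp, mul_div_cancel₀ _ hη.ne']
      have hgy : g (t + 1) y = p y * Z (t + 1) := by
        simp only [hpdef]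
        rw [div_mul_cancel₀ _ (hZpos (t + 1)).ne']
      have hpy : g (t + 1) y / Z (t + 1) = p y := rfl
      rw [hps (t + 1) y, hpy, hf]
      have e1 : Real.log (g (t + 1) y / g t y)
          = Real.log (p y) + Real.log (Z (t + 1)) - Real.log (g t y) := by
        rw [hgy, Real.log_div (mul_pos hppos (hZpos _)).ne' (hgpos t y).ne',
            Real.log_mul hppos.ne' (hZpos _).ne']
      have e2 : Real.log (p y / (g t y / Z t))
          = Real.log (p y) - (Real.log (g t y) - Real.log (Z t)) := by
        rw [Real.log_div hppos.ne' (div_pos (hgpos t y) (hZpos t)).ne',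
            Real.log_div (hgpos t y).ne' (hZpos t).ne']
      rw [e1, e2]
      ring
    rw [Finset.sum_congr rfl (fun y _ => hterm y)]
    rw [Finset.sum_sub_distrib, Finset.sum_add_distrib, ← Finset.mul_sum,
        ← Finset.mul_sum, ← Finset.mul_sum, hp1]
    have hgib2 : ∑ y, p y * Real.log (p y / (g t y / Z t)) ≥ 0 := by
      have hq1 : ∑ y, g t y / Z t = 1 := by
        rw [← Finset.sum_div, div_self (hZpos t).ne']
      have := gibbs_aux p (fun y => g t y / Z t) hp0 hp1
        (fun y => div_pos (hgpos t y) (hZpos t))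
      rw [hq1, Real.log_one] at this
      have hflip : ∀ y, p y * Real.log (g t y / Z t / p y)
          = - (p y * Real.log (p y / (g t y / Z t))) := by
        intro y
        have hppos : 0 < p y := div_pos (hgpos _ y) (hZpos _)
        rw [Real.log_div (div_pos (hgpos t y) (hZpos t)).ne' hppos.ne',
            Real.log_div hppos.ne' (div_pos (hgpos t y) (hZpos t)).ne']
        ring
      rw [Finset.sum_congr rfl (fun y _ => hflip y), Finset.sum_neg_distrib] at this
      linarith
    nlinarith [hgib2, hη]
  -- telescoping
  have htel : ∀ n : ℕ, η * Real.log (Z n)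
      ≤ ∑ t ∈ Finset.Icc 1 n, ∑ y, πs (t + 1) y * f t y := by
    intro n
    induction n with
    | zero => simp [hZ0]
    | succ n ih =>
      rw [Finset.sum_Icc_succ_top (Nat.le_add_left 1 n)]
      have := hstep n
      linarith
  -- the left side is at most η log Z T
  have hleft : (∑ t ∈ Finset.Icc 1 T, ∑ y, π y * f t y)
      - η * ∑ y, π y * Real.log (π y / μ y) ≤ η * Real.log (Z T) := by
    have hswap : ∑ t ∈ Finset.Icc 1 T, ∑ y, π y * f t y
        = ∑ y, π y * S T y := by
      rw [Finset.sum_comm]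
      exact Finset.sum_congr rfl (fun y _ => by rw [Finset.mul_sum])
    have hgib := gibbs_aux π (g T) hπ0 hπ1 (hgpos T)
    have hterm : ∀ y, π y * S T y - η * (π y * Real.log (π y / μ y))
        = η * (π y * Real.log (g T y / π y)) := by
      intro y
      rcases eq_or_lt_of_le (hπ0 y) with h | h
      · rw [← h]; ring
      · rw [Real.log_div (hgpos T y).ne' h.ne',
            Real.log_div h.ne' (hμ0 y).ne']
        simp only [hg]
        rw [Real.log_mul (hμ0 y).ne' (Real.exp_pos _).ne', Real.log_exp]
        field_simp
        ring
    have : ∑ y, (π y * S T y - η * (π y * Real.log (π y / μ y)))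
        = ∑ y, η * (π y * Real.log (g T y / π y)) :=
      Finset.sum_congr rfl (fun y _ => hterm y)
    rw [Finset.sum_sub_distrib, ← Finset.mul_sum, ← Finset.mul_sum] at this
    have h2 : η * ∑ y, π y * Real.log (g T y / π y) ≤ η * Real.log (Z T) :=
      mul_le_mul_of_nonneg_left hgib hη.le
    rw [hswap]
    linarith
  -- the right side KL term vanishes
  have hright : ∑ y, πs 1 y * Real.log (πs 1 y / μ y) = 0 := by
    rw [hinit]
    apply Finset.sum_eq_zero
    intro y _
    rw [div_self (hμ0 y).ne', Real.log_one, mul_zero]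
  rw [hright]
  have := htel T
  linarith
end

section
/- Let Y be a finite set, μ a probability distribution on Y with μ(y) > 0 for all y, η > 0, and f_1,…,f_T: Y → ℝ. Define π_1 = μ and for t ≥ 1 let π_{t+1}(y) ∝ π_t(y)·exp(f_t(y)/η). Then for every t ∈ {1,…,T−1}: η·D_KL(π_t || π_{t+1}) ≤ ⟨π_{t+1} − π_t, f_t⟩ = Σ_{y∈Y} (π_{t+1}(y) − π_t(y))·f_t(y). -/
open Finset

/-- Gibbs' inequality: KL divergence is nonnegative. -/
lemma gibbs_nonneg {Y : Type*} [Fintype Y] (p q : Y → ℝ)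
    (hp : ∀ y, 0 < p y) (hq : ∀ y, 0 < q y)
    (hp1 : ∑ y, p y = 1) (hq1 : ∑ y, q y = 1) :
    0 ≤ ∑ y, p y * Real.log (p y / q y) := by
  have key : ∀ y : Y, p y * Real.log (q y / p y) ≤ q y - p y := by
    intro y
    have h1 := Real.log_le_sub_one_of_pos (div_pos (hq y) (hp y))
    have h2 : p y * (q y / p y - 1) = q y - p y := by
      field_simp [(hp y).ne']
    nlinarith [hp y]
  have hsum : ∑ y, p y * Real.log (q y / p y) ≤ 0 := by
    calc ∑ y, p y * Real.log (q y / p y) ≤ ∑ y, (q y - p y) :=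
          Finset.sum_le_sum fun y _ => key y
      _ = 0 := by rw [Finset.sum_sub_distrib, hp1, hq1]; ring
  have : ∑ y, p y * Real.log (p y / q y)
      = - ∑ y, p y * Real.log (q y / p y) := by
    rw [← Finset.sum_neg_distrib]
    refine Finset.sum_congr rfl fun y _ => ?_
    have : Real.log (p y / q y) = - Real.log (q y / p y) := by
      rw [← Real.log_inv, inv_div]
    rw [this]; ring
  linarith [this, hsum]

/-- (Bregman-divergence step) With `π_1 = μ` fully supported and
`π_{t+1}(y) ∝ π_t(y)·exp(f_t(y)/η)` for all `t ≥ 1`, for every `t ∈ {1,…,T−1}`: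
`η·D_KL(π_t ‖ π_{t+1}) ≤ ⟨π_{t+1} − π_t, f_t⟩`. -/
theorem bregman_step_bound {Y : Type*} [Fintype Y]
    (μ : Y → ℝ) (hμ0 : ∀ y, 0 < μ y) (hμ1 : ∑ y, μ y = 1)
    (η : ℝ) (hη : 0 < η) (T : ℕ)
    (f : ℕ → Y → ℝ)
    (πs : ℕ → Y → ℝ)
    (hinit : πs 1 = μ)
    (hrec : ∀ t, 1 ≤ t → ∀ y,
      πs (t + 1) y = πs t y * Real.exp (f t y / η)
        / ∑ y', πs t y' * Real.exp (f t y' / η)) :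
    ∀ t, 1 ≤ t → t ≤ T - 1 →
      η * ∑ y, πs t y * Real.log (πs t y / πs (t + 1) y)
        ≤ ∑ y, (πs (t + 1) y - πs t y) * f t y := by
  rcases isEmpty_or_nonempty Y with hY | hY
  · exact absurd hμ1 (by simp)
  -- positivity and normalization by induction
  have hprop : ∀ t, 1 ≤ t → (∀ y, 0 < πs t y) ∧ (∑ y, πs t y = 1) := by
    intro t ht
    induction t with
    | zero => omega
    | succ n ih =>
      rcases Nat.eq_or_lt_of_le ht with h | h
      · constructor
        · intro y; rw [← h, hinit]; exact hμ0 y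
        · rw [← h, hinit]; exact hμ1
      · have hn : 1 ≤ n := by omega
        obtain ⟨hpos, hsum⟩ := ih hn
        have hZ : 0 < ∑ y', πs n y' * Real.exp (f n y' / η) := by
          apply Finset.sum_pos
          · intro y _; exact mul_pos (hpos y) (Real.exp_pos _)
          · exact Finset.univ_nonempty_iff.mpr ⟨Classical.arbitrary Y⟩
        constructor
        · intro y
          rw [hrec n hn y]
          exact div_pos (mul_pos (hpos y) (Real.exp_pos _)) hZ
        · rw [Finset.sum_congr rfl fun y _ => hrec n hn y,
            ← Finset.sum_div]
          exact div_self (ne_of_gt hZ)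
  intro t ht _
  obtain ⟨hpos, hsum⟩ := hprop t ht
  obtain ⟨hpos', hsum'⟩ := hprop (t + 1) (by omega)
  set Z := ∑ y', πs t y' * Real.exp (f t y' / η) with hZdef
  have hZ : 0 < Z := by
    apply Finset.sum_pos
    · intro y _; exact mul_pos (hpos y) (Real.exp_pos _)
    · exact Finset.univ_nonempty_iff.mpr ⟨Classical.arbitrary Y⟩
  -- log (πs t y / πs (t+1) y) = log Z - f t y / η
  have hlog : ∀ y, Real.log (πs t y / πs (t + 1) y) = Real.log Z - f t y / η := by
    intro y
    have : πs t y / πs (t + 1) y = Z / Real.exp (f t y / η) := by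
      rw [hrec t ht y, ← hZdef, div_div_eq_mul_div]
      exact mul_div_mul_left _ _ (ne_of_gt (hpos y))
    rw [this, Real.log_div (ne_of_gt hZ) (ne_of_gt (Real.exp_pos _)),
      Real.log_exp]
  -- log (πs (t+1) y / πs t y) = f t y / η - log Z
  have hlog' : ∀ y, Real.log (πs (t + 1) y / πs t y) = f t y / η - Real.log Z := by
    intro y
    have h1 : πs (t + 1) y / πs t y = (πs t y / πs (t + 1) y)⁻¹ := by
      rw [inv_div]
    rw [h1, Real.log_inv, hlog y]; ring
  have hKL := gibbs_nonneg (πs (t + 1)) (πs t) hpos' hpos hsum' hsum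
  -- rewrite KL(π_{t+1} || π_t)
  have hKLrw : ∑ y, πs (t + 1) y * Real.log (πs (t + 1) y / πs t y)
      = (∑ y, πs (t + 1) y * f t y) / η - Real.log Z := by
    rw [Finset.sum_congr rfl fun y _ => by rw [hlog' y]]
    rw [show (fun y => πs (t+1) y * (f t y / η - Real.log Z))
        = fun y => πs (t+1) y * f t y / η - πs (t+1) y * Real.log Z by
      funext y; ring]
    rw [Finset.sum_sub_distrib, ← Finset.sum_div, ← Finset.sum_mul, hsum', one_mul]
  -- rewrite LHS
  have hLHS : η * ∑ y, πs t y * Real.log (πs t y / πs (t + 1) y)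
      = η * Real.log Z - ∑ y, πs t y * f t y := by
    rw [Finset.sum_congr rfl fun y _ => by rw [hlog y]]
    rw [show (fun y => πs t y * (Real.log Z - f t y / η))
        = fun y => πs t y * Real.log Z - πs t y * f t y / η by
      funext y; ring]
    rw [Finset.sum_sub_distrib, ← Finset.sum_mul, hsum, one_mul, ← Finset.sum_div]
    field_simp
  have hRHS : ∑ y, (πs (t + 1) y - πs t y) * f t y
      = ∑ y, πs (t + 1) y * f t y - ∑ y, πs t y * f t y := by
    rw [← Finset.sum_sub_distrib]
    exact Finset.sum_congr rfl fun y _ => by ring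
  rw [hLHS, hRHS]
  have : 0 ≤ (∑ y, πs (t + 1) y * f t y) / η - Real.log Z := hKLrw ▸ hKL
  have h2 : η * Real.log Z ≤ ∑ y, πs (t + 1) y * f t y := by
    have := mul_le_mul_of_nonneg_left (by linarith : Real.log Z ≤ (∑ y, πs (t + 1) y * f t y) / η) (le_of_lt hη)
    calc η * Real.log Z ≤ η * ((∑ y, πs (t + 1) y * f t y) / η) := this
      _ = ∑ y, πs (t + 1) y * f t y := by field_simp
  linarith
end

section
/- Let Y be a finite set, μ a probability distribution on Y with μ(y) > 0 for all y, η > 0, and f_1,…,f_T: Y → ℝ with ||f_t||_∞ ≤ R for all t. Define π_1 = μ and for t ≥ 1 let π_{t+1}(y) ∝ π_t(y)·exp(f_t(y)/η). Then for every t: ⟨π_{t+1} − π_t, f_t⟩ = Σ_{y∈Y} (π_{t+1}(y) − π_t(y))·f_t(y) ≤ 2R²/η. -/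
open Finset

lemma auxF (t : ℝ) (ht : 0 ≤ t) : 2*(Real.exp t - 1) ≤ t*(Real.exp t + 1) := by
  rcases le_or_gt t 1 with h1 | h1
  · have hb := Real.exp_bound' ht h1 (n := 3) (by norm_num)
    have hlow := Real.add_one_le_exp t
    simp [Finset.sum_range_succ, Nat.factorial] at hb
    nlinarith [pow_nonneg ht 3, pow_nonneg ht 4]
  · rcases lt_or_ge t 2 with h2 | h2
    · have he : Real.exp 1 < 2.7182818286 := Real.exp_one_lt_d9
      have h3 : Real.exp (t-1) ≤ 1/(2-t) := by
        have := Real.add_one_le_exp (-(t-1))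
        have hpos : (0:ℝ) < 2 - t := by linarith
        rw [Real.exp_neg] at this
        rw [le_div_iff₀ hpos]
        have hx : Real.exp (t-1) > 0 := Real.exp_pos _
        have hinv : Real.exp (t-1) * (Real.exp (t-1))⁻¹ = 1 :=
          mul_inv_cancel₀ (ne_of_gt hx)
        nlinarith [mul_le_mul_of_nonneg_left this hx.le]
      have ht' : Real.exp t = Real.exp 1 * Real.exp (t-1) := by
        rw [← Real.exp_add]; ring_nf
      have hpos : (0:ℝ) < 2 - t := by linarith
      have h4 : (2 - t) * Real.exp t ≤ Real.exp 1 := by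
        rw [ht']
        calc (2-t) * (Real.exp 1 * Real.exp (t-1))
            ≤ (2-t) * (Real.exp 1 * (1/(2-t))) := by
              apply mul_le_mul_of_nonneg_left _ hpos.le
              exact mul_le_mul_of_nonneg_left h3 (Real.exp_pos 1).le
          _ = Real.exp 1 := by field_simp
      nlinarith
    · nlinarith [Real.exp_pos t]

lemma key' (a b : ℝ) (h : b ≤ a) :
    (a-b)*(Real.exp a - Real.exp b) ≤ (a-b)^2*(Real.exp a + Real.exp b)/2 := by
  have ht : 0 ≤ a - b := by linarith
  have hF := auxF (a-b) ht
  have hab : Real.exp a = Real.exp b * Real.exp (a-b) := by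
    rw [← Real.exp_add]; ring_nf
  have hEb := Real.exp_pos b
  nlinarith [mul_le_mul_of_nonneg_left hF (mul_nonneg ht hEb.le)]

lemma key (a b : ℝ) :
    (a-b)*(Real.exp a - Real.exp b) ≤ (a-b)^2*(Real.exp a + Real.exp b)/2 := by
  rcases le_total b a with h | h
  · exact key' a b h
  · have := key' b a h
    nlinarith [this]

/-- (One-step regret bound) With `π_1 = μ` fully supported,
`‖f_t‖_∞ ≤ R` for all `t`, and `π_{t+1}(y) ∝ π_t(y)·exp(f_t(y)/η)` for all
`t ≥ 1`, each step satisfies `⟨π_{t+1} − π_t, f_t⟩ ≤ 2R²/η`. -/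
theorem one_step_regret_bound {Y : Type*} [Fintype Y]
    (μ : Y → ℝ) (hμ0 : ∀ y, 0 < μ y) (hμ1 : ∑ y, μ y = 1)
    (η : ℝ) (hη : 0 < η) (T : ℕ)
    (f : ℕ → Y → ℝ) (R : ℝ) (hR : ∀ t y, |f t y| ≤ R)
    (πs : ℕ → Y → ℝ)
    (hinit : πs 1 = μ)
    (hrec : ∀ t, 1 ≤ t → ∀ y,
      πs (t + 1) y = πs t y * Real.exp (f t y / η)
        / ∑ y', πs t y' * Real.exp (f t y' / η)) :
    ∀ t, 1 ≤ t →
      ∑ y, (πs (t + 1) y - πs t y) * f t y ≤ 2 * R ^ 2 / η := by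
  have hne : Nonempty Y := by
    by_contra h
    rw [not_nonempty_iff] at h
    simp at hμ1
  have hprob : ∀ s, 1 ≤ s → (∀ y, 0 < πs s y) ∧ (∑ y, πs s y) = 1 := by
    intro s hs
    induction s, hs using Nat.le_induction with
    | base => rw [hinit]; exact ⟨hμ0, hμ1⟩
    | succ n hn ih =>
      obtain ⟨hpos, hsum⟩ := ih
      have hZ : 0 < ∑ y', πs n y' * Real.exp (f n y' / η) :=
        Finset.sum_pos (fun y _ => mul_pos (hpos y) (Real.exp_pos _))
          Finset.univ_nonempty
      refine ⟨fun y => ?_, ?_⟩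
      · rw [hrec n hn y]
        exact div_pos (mul_pos (hpos y) (Real.exp_pos _)) hZ
      · rw [Finset.sum_congr rfl (fun y _ => hrec n hn y), ← Finset.sum_div]
        exact div_self hZ.ne'
  intro t ht
  obtain ⟨hpos, hsum⟩ := hprob t ht
  set p : Y → ℝ := πs t with hp
  set E : Y → ℝ := fun y => Real.exp (f t y / η) with hE
  have hEpos : ∀ y, 0 < E y := fun y => Real.exp_pos _
  set Z : ℝ := ∑ y', p y' * E y' with hZdef
  have hZ : 0 < Z :=
    Finset.sum_pos (fun y _ => mul_pos (hpos y) (hEpos y)) Finset.univ_nonempty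
  have hR0 : 0 ≤ R := le_trans (abs_nonneg _) (hR t (Classical.arbitrary Y))
  set A : ℝ := ∑ y, p y * f t y with hA
  set B : ℝ := ∑ y, p y * f t y * E y with hB
  have hLHS : ∑ y, (πs (t + 1) y - πs t y) * f t y
      = ∑ y, (p y * E y / Z - p y) * f t y :=
    Finset.sum_congr rfl (fun y _ => by rw [hrec t ht y])
  -- the double-sum identity
  have hS : ∑ y, ∑ y', p y * p y' * ((f t y - f t y') * (E y - E y'))
      = 2*B - 2*Z*A := by
    have h1 : ∀ y y', p y * p y' * ((f t y - f t y') * (E y - E y'))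
        = (p y * f t y * E y) * p y' + p y * (p y' * f t y' * E y')
          - ((p y * f t y) * (p y' * E y') + (p y * E y) * (p y' * f t y')) := by
      intros; ring
    simp only [h1, Finset.sum_sub_distrib, Finset.sum_add_distrib,
      ← Finset.sum_mul, ← Finset.mul_sum]
    rw [hsum]
    simp only [← hA, ← hB, ← hZdef]
    ring
  have hmain : ∑ y, (p y * E y / Z - p y) * f t y
      = (∑ y, ∑ y', p y * p y' * ((f t y - f t y') * (E y - E y'))) / (2*Z) := by
    rw [hS, eq_div_iff (by positivity : (2*Z) ≠ (0:ℝ))]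
    have h2 : ∀ y, (p y * E y / Z - p y) * f t y * (2*Z)
        = 2 * (p y * f t y * E y) - 2*Z*(p y * f t y) := by
      intro y; field_simp
    rw [Finset.sum_mul, Finset.sum_congr rfl (fun y _ => h2 y),
      Finset.sum_sub_distrib, ← Finset.mul_sum, ← Finset.mul_sum, ← hB, ← hA]
  -- per-term bound
  have hterm : ∀ y y', (f t y - f t y') * (E y - E y')
      ≤ (2*R^2/η) * (E y + E y') := by
    intro y y'
    have hk := key (f t y / η) (f t y' / η)
    rw [div_sub_div_same] at hk
    have hmul := mul_le_mul_of_nonneg_left hk hη.le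
    have e1 : (f t y - f t y') * (E y - E y')
        = η * ((f t y - f t y') / η * (Real.exp (f t y / η) - Real.exp (f t y' / η))) := by
      rw [hE]; field_simp
    have e2 : η * (((f t y - f t y') / η)^2
          * (Real.exp (f t y / η) + Real.exp (f t y' / η)) / 2)
        = (f t y - f t y')^2 * (E y + E y') / (2*η) := by
      rw [hE]; field_simp
    have h2 : (f t y - f t y')^2 ≤ 4*R^2 := by
      have a1 := abs_le.mp (hR t y)
      have a2 := abs_le.mp (hR t y')
      nlinarith [a1.1, a1.2, a2.1, a2.2]
    calc (f t y - f t y') * (E y - E y')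
        ≤ (f t y - f t y')^2 * (E y + E y') / (2*η) := by
          rw [e1, ← e2]; exact hmul
      _ ≤ 4*R^2 * (E y + E y') / (2*η) := by
          have hEE : 0 ≤ E y + E y' := add_nonneg (hEpos y).le (hEpos y').le
          apply div_le_div_of_nonneg_right ?_ (by positivity)
          exact mul_le_mul_of_nonneg_right h2 hEE
      _ = (2*R^2/η) * (E y + E y') := by field_simp; ring
  -- sum the bound
  have hSle : ∑ y, ∑ y', p y * p y' * ((f t y - f t y') * (E y - E y'))
      ≤ (2*R^2/η) * (2*Z) := by
    have step : ∑ y, ∑ y', p y * p y' * ((f t y - f t y') * (E y - E y'))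
        ≤ ∑ y, ∑ y', p y * p y' * ((2*R^2/η) * (E y + E y')) := by
      refine Finset.sum_le_sum (fun y _ => Finset.sum_le_sum (fun y' _ => ?_))
      exact mul_le_mul_of_nonneg_left (hterm y y')
        (mul_nonneg (hpos y).le (hpos y').le)
    refine step.trans (le_of_eq ?_)
    have h1 : ∀ y y', p y * p y' * ((2*R^2/η) * (E y + E y'))
        = (2*R^2/η) * ((p y * E y) * p y' + p y * (p y' * E y')) := by
      intros; ring
    simp only [h1, ← Finset.mul_sum, Finset.sum_add_distrib, ← Finset.sum_mul]
    rw [hsum]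
    simp only [← hZdef]
    ring
  rw [hLHS, hmain, div_le_iff₀ (by positivity : (0:ℝ) < 2*Z)]
  exact hSle
end

section
/- Let Y be a finite set, μ a probability distribution on Y with μ(y) > 0 for all y, f_1,…,f_T: Y → ℝ with ||f_t||_∞ ≤ R for all t, and let π be a probability distribution on Y with c := D_KL(π || μ) > 0. Set η = R·√(2T/c), define π_1 = μ and for t ≥ 1 let π_{t+1}(y) ∝ π_t(y)·exp(f_t(y)/η). Then Σ_{t=1}^T Σ_{y∈Y} (π(y) − π_t(y))·f_t(y) ≤ 2√2 · R · √(c·T). -/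
open Finset

lemma exp_quad {x : ℝ} (hx : |x| ≤ 1) : Real.exp x ≤ 1 + x + x ^ 2 := by
  have h := Real.exp_bound hx (n := 2) (by norm_num)
  simp [Finset.sum_range_succ] at h
  rw [abs_le] at h
  nlinarith [sq_abs x, sq_nonneg x, abs_nonneg x]

lemma gibbs {Y : Type*} [Fintype Y] (p q : Y → ℝ)
    (hp0 : ∀ y, 0 ≤ p y) (hq0 : ∀ y, 0 < q y)
    (hp1 : ∑ y, p y = 1) (hq1 : ∑ y, q y = 1) :
    0 ≤ ∑ y, p y * Real.log (p y / q y) := by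
  have key : ∀ y : Y, p y * Real.log (q y / p y) ≤ q y - p y := by
    intro y
    rcases eq_or_lt_of_le (hp0 y) with h | h
    · simp [← h]; linarith [(hq0 y).le]
    · have hlog : Real.log (q y / p y) ≤ q y / p y - 1 :=
        Real.log_le_sub_one_of_pos (div_pos (hq0 y) h)
      calc p y * Real.log (q y / p y) ≤ p y * (q y / p y - 1) :=
            mul_le_mul_of_nonneg_left hlog h.le
        _ = q y - p y := by field_simp
  have h2 : ∑ y, p y * Real.log (q y / p y) ≤ 0 := by
    calc ∑ y, p y * Real.log (q y / p y) ≤ ∑ y, (q y - p y) :=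
          Finset.sum_le_sum fun y _ => key y
      _ = 0 := by rw [Finset.sum_sub_distrib, hp1, hq1]; ring
  have h3 : ∀ y : Y, p y * Real.log (p y / q y) = -(p y * Real.log (q y / p y)) := by
    intro y
    rcases eq_or_lt_of_le (hp0 y) with h | h
    · simp [← h]
    · rw [Real.log_div (ne_of_gt h) (ne_of_gt (hq0 y)),
        Real.log_div (ne_of_gt (hq0 y)) (ne_of_gt h)]
      ring
  simp_rw [h3]
  rw [Finset.sum_neg_distrib]
  linarith

set_option maxHeartbeats 1000000 in
/-- (Tuned regret bound) With `π_1 = μ` fully supported,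
`‖f_t‖_∞ ≤ R` for all `t`, a comparator distribution `π` with
`c := D_KL(π‖μ) > 0`, stepsize `η = R·√(2T/c)` and
`π_{t+1}(y) ∝ π_t(y)·exp(f_t(y)/η)` for all `t ≥ 1`, we get
`Σ_{t=1}^T ⟨π − π_t, f_t⟩ ≤ 2√2·R·√(cT)`. -/
theorem mirror_descent_regret_tuned {Y : Type*} [Fintype Y]
    (μ : Y → ℝ) (hμ0 : ∀ y, 0 < μ y) (hμ1 : ∑ y, μ y = 1)
    (T : ℕ)
    (f : ℕ → Y → ℝ) (R : ℝ) (hR : ∀ t y, |f t y| ≤ R)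
    (π : Y → ℝ) (hπ0 : ∀ y, 0 ≤ π y) (hπ1 : ∑ y, π y = 1)
    (c : ℝ) (hc : c = ∑ y, π y * Real.log (π y / μ y)) (hcpos : 0 < c)
    (η : ℝ) (hη : η = R * Real.sqrt (2 * T / c))
    (πs : ℕ → Y → ℝ)
    (hinit : πs 1 = μ)
    (hrec : ∀ t, 1 ≤ t → ∀ y,
      πs (t + 1) y = πs t y * Real.exp (f t y / η)
        / ∑ y', πs t y' * Real.exp (f t y' / η)) :
    ∑ t ∈ Finset.Icc 1 T, ∑ y, (π y - πs t y) * f t y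
      ≤ 2 * Real.sqrt 2 * R * Real.sqrt (c * T) := by
  -- Y is nonempty
  have hYne : (Finset.univ : Finset Y).Nonempty := by
    by_contra h
    rw [Finset.not_nonempty_iff_eq_empty] at h
    rw [h, Finset.sum_empty] at hμ1
    norm_num at hμ1
  obtain ⟨y0, _⟩ := hYne
  -- dispatch T = 0
  rcases Nat.eq_zero_or_pos T with hT0 | hTpos
  · simp [hT0]
  have hT1 : (1 : ℝ) ≤ (T : ℝ) := by exact_mod_cast hTpos
  have hTposR : (0 : ℝ) < T := by linarith
  -- R ≥ 0
  have hR0 : 0 ≤ R := le_trans (abs_nonneg _) (hR 1 y0)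
  -- πs distributions
  have hps : ∀ t, 1 ≤ t → (∀ y, 0 < πs t y) ∧ (∑ y, πs t y = 1) := by
    intro t ht
    induction t, ht using Nat.le_induction with
    | base => exact ⟨fun y => hinit ▸ hμ0 y, hinit ▸ hμ1⟩
    | succ t ht ih =>
      have Zpos : 0 < ∑ y', πs t y' * Real.exp (f t y' / η) :=
        Finset.sum_pos (fun y _ => mul_pos (ih.1 y) (Real.exp_pos _)) ⟨y0, Finset.mem_univ y0⟩
      refine ⟨fun y => ?_, ?_⟩
      · rw [hrec t ht y]
        exact div_pos (mul_pos (ih.1 y) (Real.exp_pos _)) Zpos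
      · simp_rw [hrec t ht]
        rw [← Finset.sum_div, div_self (ne_of_gt Zpos)]
  -- dispatch R = 0
  rcases eq_or_lt_of_le hR0 with hReq | hRpos
  · have hf0 : ∀ t y, f t y = 0 := fun t y =>
      abs_eq_zero.mp (le_antisymm (hReq ▸ hR t y) (abs_nonneg _))
    simp only [hf0, mul_zero, Finset.sum_const_zero]
    rw [← hReq]
    positivity
  -- trivial-bound branch
  rcases le_or_gt c (2 * T) with hc2 | hc2
  swap
  · have hbound : ∀ t ∈ Finset.Icc 1 T, ∑ y, (π y - πs t y) * f t y ≤ 2 * R := by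
      intro t ht
      rw [Finset.mem_Icc] at ht
      have hsum1 := (hps t ht.1).2
      have hpos := (hps t ht.1).1
      calc ∑ y, (π y - πs t y) * f t y ≤ ∑ y, (π y + πs t y) * R := by
            refine Finset.sum_le_sum fun y _ => ?_
            calc (π y - πs t y) * f t y ≤ |(π y - πs t y) * f t y| := le_abs_self _
              _ = |π y - πs t y| * |f t y| := abs_mul _ _
              _ ≤ (π y + πs t y) * R := by
                  have habs : |π y - πs t y| ≤ π y + πs t y := by
                    calc |π y - πs t y| ≤ |π y| + |πs t y| := abs_sub _ _
                      _ = π y + πs t y := by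
                        rw [abs_of_nonneg (hπ0 y), abs_of_pos (hpos y)]
                  exact mul_le_mul habs (hR t y) (abs_nonneg _)
                    (add_nonneg (hπ0 y) (hpos y).le)
        _ = 2 * R := by
            rw [← Finset.sum_mul, Finset.sum_add_distrib, hπ1, hsum1]; ring
    calc ∑ t ∈ Finset.Icc 1 T, ∑ y, (π y - πs t y) * f t y
        ≤ ∑ t ∈ Finset.Icc 1 T, (2 * R) := Finset.sum_le_sum hbound
      _ = T * (2 * R) := by rw [Finset.sum_const, Nat.card_Icc]; simp
      _ ≤ 2 * Real.sqrt 2 * R * Real.sqrt (c * T) := by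
          have h1 : Real.sqrt (2 * T * T) ≤ Real.sqrt (c * T) :=
            Real.sqrt_le_sqrt (by nlinarith)
          have h2 : Real.sqrt (2 * T * T) = Real.sqrt 2 * T := by
            rw [mul_assoc, Real.sqrt_mul (by norm_num), Real.sqrt_mul_self hTposR.le]
          have h3 : Real.sqrt 2 * T ≤ Real.sqrt (c * T) := h2 ▸ h1
          have h4 : 2 * Real.sqrt 2 * R * (Real.sqrt 2 * T)
              ≤ 2 * Real.sqrt 2 * R * Real.sqrt (c * T) := by
            apply mul_le_mul_of_nonneg_left h3
            positivity
          have h5 : Real.sqrt 2 * Real.sqrt 2 = 2 :=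
            Real.mul_self_sqrt (by norm_num)
          nlinarith [mul_pos hRpos hTposR]
  -- main branch: c ≤ 2T
  set u := Real.sqrt (2 * T / c) with hu
  have hu1 : 1 ≤ u := by
    rw [hu, show (1:ℝ) = Real.sqrt 1 by simp]
    apply Real.sqrt_le_sqrt
    rw [le_div_iff₀ hcpos]
    linarith
  have hupos : 0 < u := lt_of_lt_of_le one_pos hu1
  have hu2 : u ^ 2 = 2 * T / c := Real.sq_sqrt (by positivity)
  have hηpos : 0 < η := by rw [hη]; exact mul_pos hRpos hupos
  have hRη : R / η ≤ 1 := by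
    rw [hη, div_le_one (mul_pos hRpos hupos)]
    nlinarith
  set Φ : ℕ → ℝ := fun t => ∑ y, π y * Real.log (π y / πs t y) with hΦ
  -- per-step inequality
  have step : ∀ t, 1 ≤ t →
      ∑ y, (π y - πs t y) * f t y ≤ η * (Φ t - Φ (t + 1)) + R ^ 2 / η := by
    intro t ht
    set Z := ∑ y', πs t y' * Real.exp (f t y' / η) with hZdef
    have hpos := (hps t ht).1
    have hsum1 := (hps t ht).2
    have Zpos : 0 < Z :=
      Finset.sum_pos (fun y _ => mul_pos (hpos y) (Real.exp_pos _)) ⟨y0, Finset.mem_univ y0⟩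
    have hdiff : Φ t - Φ (t + 1) = (∑ y, π y * f t y) / η - Real.log Z := by
      have hterm : ∀ y : Y,
          π y * Real.log (π y / πs t y) - π y * Real.log (π y / πs (t + 1) y)
            = π y * (f t y / η) - π y * Real.log Z := by
        intro y
        rcases eq_or_lt_of_le (hπ0 y) with h | h
        · simp [← h]
        · have hpt1 : πs (t + 1) y = πs t y * Real.exp (f t y / η) / Z := hrec t ht y
          have hpt1pos : 0 < πs (t + 1) y := by
            rw [hpt1]; exact div_pos (mul_pos (hpos y) (Real.exp_pos _)) Zpos
          rw [Real.log_div (ne_of_gt h) (ne_of_gt (hpos y)),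
            Real.log_div (ne_of_gt h) (ne_of_gt hpt1pos), hpt1,
            Real.log_div (ne_of_gt (mul_pos (hpos y) (Real.exp_pos _))) (ne_of_gt Zpos),
            Real.log_mul (ne_of_gt (hpos y)) (ne_of_gt (Real.exp_pos _)),
            Real.log_exp]
          ring
      rw [hΦ]
      simp only
      rw [← Finset.sum_sub_distrib]
      simp_rw [hterm]
      rw [Finset.sum_sub_distrib, ← Finset.sum_mul, hπ1, one_mul, Finset.sum_div]
      congr 1
      exact Finset.sum_congr rfl fun y _ => (mul_div_assoc _ _ _).symm
    have hlogZ : Real.log Z ≤ (∑ y, πs t y * f t y) / η + R ^ 2 / η ^ 2 := by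
      have hZle : Z ≤ 1 + (∑ y, πs t y * f t y) / η + R ^ 2 / η ^ 2 := by
        calc Z ≤ ∑ y, πs t y * (1 + f t y / η + (f t y / η) ^ 2) := by
              refine Finset.sum_le_sum fun y _ => ?_
              refine mul_le_mul_of_nonneg_left (exp_quad ?_) (hpos y).le
              rw [abs_div, abs_of_pos hηpos]
              exact le_trans (div_le_div_of_nonneg_right (hR t y) hηpos.le) hRη
          _ ≤ 1 + (∑ y, πs t y * f t y) / η + R ^ 2 / η ^ 2 := by
              have expand : ∑ y, πs t y * (1 + f t y / η + (f t y / η) ^ 2)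
                  = 1 + (∑ y, πs t y * f t y) / η
                    + ∑ y, πs t y * (f t y / η) ^ 2 := by
                simp_rw [mul_add, mul_one]
                rw [Finset.sum_add_distrib, Finset.sum_add_distrib, hsum1,
                  Finset.sum_div]
                simp_rw [mul_div_assoc]
              rw [expand]
              have hsq : ∑ y, πs t y * (f t y / η) ^ 2 ≤ R ^ 2 / η ^ 2 := by
                calc ∑ y, πs t y * (f t y / η) ^ 2
                    ≤ ∑ y, πs t y * (R ^ 2 / η ^ 2) := by
                      refine Finset.sum_le_sum fun y _ => ?_
                      apply mul_le_mul_of_nonneg_left _ (hpos y).le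
                      rw [div_pow]
                      apply div_le_div_of_nonneg_right _ (by positivity)
                      calc f t y ^ 2 = |f t y| ^ 2 := (sq_abs _).symm
                        _ ≤ R ^ 2 := by nlinarith [hR t y, abs_nonneg (f t y)]
                  _ = R ^ 2 / η ^ 2 := by rw [← Finset.sum_mul, hsum1, one_mul]
              linarith
      linarith [Real.log_le_sub_one_of_pos Zpos]
    have key : ∑ y, (π y - πs t y) * f t y
        = ∑ y, π y * f t y - ∑ y, πs t y * f t y := by
      rw [← Finset.sum_sub_distrib]
      exact Finset.sum_congr rfl fun y _ => by ring
    rw [key]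
    have h1 : η * (Φ t - Φ (t + 1)) = ∑ y, π y * f t y - η * Real.log Z := by
      rw [hdiff]; field_simp
    rw [h1]
    have h2 : η * Real.log Z ≤ ∑ y, πs t y * f t y + R ^ 2 / η := by
      have := mul_le_mul_of_nonneg_left hlogZ hηpos.le
      calc η * Real.log Z ≤ η * ((∑ y, πs t y * f t y) / η + R ^ 2 / η ^ 2) := this
        _ = ∑ y, πs t y * f t y + R ^ 2 / η := by field_simp
    linarith
  -- telescoping
  have htel : ∀ n : ℕ, ∑ t ∈ Finset.Icc 1 n, (Φ t - Φ (t + 1)) = Φ 1 - Φ (n + 1) := by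
    intro n
    induction n with
    | zero => simp
    | succ n ih =>
      rw [Finset.sum_Icc_succ_top (by omega : 1 ≤ n + 1), ih]
      ring
  have hΦ1 : Φ 1 = c := by rw [hΦ]; simp [hinit, hc]
  have hΦT : 0 ≤ Φ (T + 1) := by
    have h := hps (T + 1) (by omega)
    exact gibbs π (πs (T + 1)) hπ0 h.1 hπ1 h.2
  have hmain : ∑ t ∈ Finset.Icc 1 T, ∑ y, (π y - πs t y) * f t y
      ≤ η * c + T * (R ^ 2 / η) := by
    calc ∑ t ∈ Finset.Icc 1 T, ∑ y, (π y - πs t y) * f t y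
        ≤ ∑ t ∈ Finset.Icc 1 T, (η * (Φ t - Φ (t + 1)) + R ^ 2 / η) := by
          refine Finset.sum_le_sum fun t ht => step t (Finset.mem_Icc.mp ht).1
      _ = η * (Φ 1 - Φ (T + 1)) + T * (R ^ 2 / η) := by
          rw [Finset.sum_add_distrib, ← Finset.mul_sum, htel T, Finset.sum_const,
            Nat.card_Icc]
          simp [nsmul_eq_mul]
      _ ≤ η * c + T * (R ^ 2 / η) := by
          rw [hΦ1]
          have : Φ 1 - Φ (T + 1) ≤ c := by rw [hΦ1]; linarith
          nlinarith [hηpos]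
  -- final arithmetic
  have hcu : c * u = Real.sqrt 2 * Real.sqrt (c * T) := by
    rw [hu]
    rw [show c = Real.sqrt (c ^ 2) by rw [Real.sqrt_sq hcpos.le]]
    rw [← Real.sqrt_mul (by positivity), ← Real.sqrt_mul (by norm_num)]
    congr 1
    field_simp
    ring
    rw [Real.sq_sqrt (by positivity)]
  have huu : u * u = 2 * T / c := by rw [← sq]; exact hu2
  have hstep2 : (T : ℝ) * (R ^ 2 / η) = R * (c * u) / 2 := by
    rw [hη]
    apply mul_right_cancel₀ hupos.ne'
    have e1 : (T : ℝ) * (R ^ 2 / (R * u)) * u = T * R := by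
      field_simp
    have e2 : R * (c * u) / 2 * u = R * c * (u * u) / 2 := by ring
    rw [e1, e2, huu]
    field_simp
  have hηc : η * c = R * (c * u) := by rw [hη]; ring
  calc ∑ t ∈ Finset.Icc 1 T, ∑ y, (π y - πs t y) * f t y
      ≤ η * c + T * (R ^ 2 / η) := hmain
    _ = (3 / 2) * R * (c * u) := by rw [hηc, hstep2]; ring
    _ ≤ 2 * Real.sqrt 2 * R * Real.sqrt (c * T) := by
        rw [hcu]
        nlinarith [Real.sqrt_nonneg (c * T), Real.sqrt_nonneg (2:ℝ)]
end

section
/- Let F be a finite class of functions f: X×Y → ℝ. Let the dataset be drawn as follows: (x_i, y_i, y_i')_{i=1}^n are i.i.d. with x_i ~ ρ and y_i, y_i' independent from π_ref(·|x_i), and conditionally on (x_i, y_i, y_i') the labels o_i ∈ {+, −} are independent with P(o_i = + | x_i, y_i, y_i') = σ(r*(x_i, y_i) − r*(x_i, y_i')); write P_g(+|x,y,y') = σ(g(x,y) − g(x,y')) and P_g(−|x,y,y') = 1 − σ(g(x,y) − g(x,y')). Then for any δ ∈ (0,1), with probability at least 1−δ, simultaneously for all f ∈ F: E_{x~ρ,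 y1,y2~π_ref(·|x)}[ D_TV( P_f(·|x,y1,y2), P_{r*}(·|x,y1,y2) )² ] ≤ (1/n)·Σ_{i=1}^n log( P_{r*}(o_i|x_i,y_i,y_i') / P_f(o_i|x_i,y_i,y_i') ) + (4/n)·log(|F|/δ). -/
open Finset

lemma tv_sq_le_hellinger (a b : ℝ) (ha0 : 0 ≤ a) (ha1 : a ≤ 1) (hb0 : 0 ≤ b) (hb1 : b ≤ 1) :
    (a - b) ^ 2 ≤ 2 - 2 * Real.sqrt (a * b) - 2 * Real.sqrt ((1 - a) * (1 - b)) := by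
  have h1 : Real.sqrt (a*b) = Real.sqrt a * Real.sqrt b := Real.sqrt_mul ha0 b
  have h2 : Real.sqrt ((1-a)*(1-b)) = Real.sqrt (1-a) * Real.sqrt (1-b) :=
    Real.sqrt_mul (by linarith) _
  set sa := Real.sqrt a with hsa'
  set sb := Real.sqrt b with hsb'
  set sc := Real.sqrt (1-a) with hsc'
  set sd := Real.sqrt (1-b) with hsd'
  have hsa : sa ^ 2 = a := Real.sq_sqrt ha0
  have hsb : sb ^ 2 = b := Real.sq_sqrt hb0
  have hsc : sc ^ 2 = 1 - a := Real.sq_sqrt (by linarith)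
  have hsd : sd ^ 2 = 1 - b := Real.sq_sqrt (by linarith)
  have hsa0 : 0 ≤ sa := Real.sqrt_nonneg _
  have hsb0 : 0 ≤ sb := Real.sqrt_nonneg _
  have hsc0 : 0 ≤ sc := Real.sqrt_nonneg _
  have hsd0 : 0 ≤ sd := Real.sqrt_nonneg _
  rw [h1, h2]
  have hRHS : 2 - 2 * (sa * sb) - 2 * (sc * sd)
      = (sa - sb) ^ 2 + (sc - sd) ^ 2 := by linear_combination -hsa - hsb - hsc - hsd
  rw [hRHS]
  have hfact : (a - b) ^ 2 = (-((sa - sb) * (sc - sd))) * ((sa + sb) * (sc + sd)) := by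
    have e1 : a - b = (sa - sb) * (sa + sb) := by linear_combination hsb - hsa
    have e2 : a - b = -((sc - sd) * (sc + sd)) := by linear_combination hsc - hsd
    calc (a - b) ^ 2 = (a - b) * (a - b) := sq (a-b) ▸ by ring
    _ = ((sa - sb) * (sa + sb)) * (-((sc - sd) * (sc + sd))) := by rw [← e1, ← e2]
    _ = (-((sa - sb) * (sc - sd))) * ((sa + sb) * (sc + sd)) := by ring
  have huv : -((sa - sb) * (sc - sd)) ≤ ((sa - sb) ^ 2 + (sc - sd) ^ 2) / 2 := by
    nlinarith [sq_nonneg ((sa - sb) + (sc - sd))]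
  have huv0 : 0 ≤ -((sa - sb) * (sc - sd)) := by
    have hre : (sb - sa) * (sc - sd) = -((sa - sb) * (sc - sd)) := by ring
    rcases le_total a b with h | h
    · have h3 : sa ≤ sb := Real.sqrt_le_sqrt h
      have h4 : sd ≤ sc := Real.sqrt_le_sqrt (by linarith)
      have h5 : 0 ≤ (sb - sa) * (sc - sd) := mul_nonneg (by linarith) (by linarith)
      linarith
    · have h3 : sb ≤ sa := Real.sqrt_le_sqrt h
      have h4 : sc ≤ sd := Real.sqrt_le_sqrt (by linarith)
      have h5 : (sa - sb) * (sd - sc) = (sb - sa) * (sc - sd) := by ring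
      have h6 : 0 ≤ (sa - sb) * (sd - sc) := mul_nonneg (by linarith) (by linarith)
      linarith
  have hS : (sa + sb) * (sc + sd) ≤ 2 := by
    nlinarith [sq_nonneg (sa - sc), sq_nonneg (sa - sd), sq_nonneg (sb - sc), sq_nonneg (sb - sd)]
  have hS0 : 0 ≤ (sa + sb) * (sc + sd) := by positivity
  calc (a - b) ^ 2 = (-((sa - sb) * (sc - sd))) * ((sa + sb) * (sc + sd)) := hfact
  _ ≤ (((sa - sb) ^ 2 + (sc - sd) ^ 2) / 2) * 2 := by
      apply mul_le_mul huv hS hS0 (by positivity)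
  _ = (sa - sb) ^ 2 + (sc - sd) ^ 2 := by ring

open scoped Classical in
/-- (Lemma "MLE-TV") For the Bradley–Terry data-generating
process (samples in `X × Y × Y × Bool`, `Bool` encoding the label `o`, `true = +`,
with single-sample probability `p` and i.i.d. product weights), for any
`δ ∈ (0,1)`, with probability at least `1−δ`, simultaneously for all `f ∈ F`:
`E_{x~ρ, y1,y2~π_ref}[ D_TV(P_f(·|x,y1,y2), P_{r*}(·|x,y1,y2))² ]
  ≤ (1/n)·Σ_i log(P_{r*}(o_i|·)/P_f(o_i|·)) + (4/n)·log(|F|/δ)`,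
where `D_TV(P_f, P_{r*}) = |P_f(+) − P_{r*}(+)| = |σ(f(x,y1)−f(x,y2)) − σ(r*(x,y1)−r*(x,y2))|`. -/
theorem mle_tv_bound {X Y : Type*} [Fintype X] [Fintype Y]
    (ρ : X → ℝ) (hρ0 : ∀ x, 0 ≤ ρ x) (hρ1 : ∑ x, ρ x = 1)
    (πref : X → Y → ℝ) (hπref0 : ∀ x y, 0 ≤ πref x y) (hπref1 : ∀ x, ∑ y, πref x y = 1)
    (rstar : X → Y → ℝ) (FF : Finset (X → Y → ℝ)) (n : ℕ) (hn : 0 < n)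
    (δ : ℝ) (hδ0 : 0 < δ) (hδ1 : δ < 1) :
    let σ : ℝ → ℝ := fun z => 1 / (1 + Real.exp (-z));
    let P : (X → Y → ℝ) → X × Y × Y × Bool → ℝ := fun h e =>
      if e.2.2.2 then σ (h e.1 e.2.1 - h e.1 e.2.2.1)
      else 1 - σ (h e.1 e.2.1 - h e.1 e.2.2.1);
    let p : X × Y × Y × Bool → ℝ := fun e =>
      ρ e.1 * πref e.1 e.2.1 * πref e.1 e.2.2.1 * P rstar e;
    1 - δ ≤ ∑ s ∈ Finset.univ.filter (fun s : Fin n → X × Y × Y × Bool =>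
        ∀ f ∈ FF,
          ∑ x, ρ x * ∑ y1, ∑ y2, πref x y1 * πref x y2 *
              (σ (f x y1 - f x y2) - σ (rstar x y1 - rstar x y2)) ^ 2
            ≤ ((1 : ℝ) / n) * ∑ i, Real.log (P rstar (s i) / P f (s i))
              + ((4 : ℝ) / n) * Real.log (FF.card / δ)),
      ∏ i, p (s i) := by
  classical
  intro σ P p
  -- basic positivity facts for σ
  have hσ0 : ∀ z, 0 < σ z := by
    intro z
    have := Real.exp_pos (-z)
    simp only [σ]
    positivity
  have hσ1 : ∀ z, σ z < 1 := by
    intro z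
    have h1 : (1:ℝ) < 1 + Real.exp (-z) := by linarith [Real.exp_pos (-z)]
    simp only [σ]
    rw [div_lt_one (by linarith)]
    exact h1
  have hP0 : ∀ h : X → Y → ℝ, ∀ e : X × Y × Y × Bool, 0 < P h e := by
    intro h e
    simp only [P]
    split
    · exact hσ0 _
    · linarith [hσ1 (h e.1 e.2.1 - h e.1 e.2.2.1)]
  have hp0 : ∀ e : X × Y × Y × Bool, 0 ≤ p e := by
    intro e
    simp only [p]
    have := (hP0 rstar e).le
    have h1 := hρ0 e.1
    have h2 := hπref0 e.1 e.2.1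
    have h3 := hπref0 e.1 e.2.2.1
    positivity
  -- sum over the sample space as iterated sum
  have hsumE : ∀ g : X × Y × Y × Bool → ℝ, ∑ e : X × Y × Y × Bool, g e
      = ∑ x, ∑ y1, ∑ y2, (g (x,y1,y2,true) + g (x,y1,y2,false)) := by
    intro g
    rw [Fintype.sum_prod_type]
    refine Finset.sum_congr rfl fun x _ => ?_
    rw [Fintype.sum_prod_type]
    refine Finset.sum_congr rfl fun y1 _ => ?_
    rw [Fintype.sum_prod_type]
    refine Finset.sum_congr rfl fun y2 _ => ?_
    rw [Fintype.sum_bool]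
  -- total mass of the weights
  have hw1x : ∀ x, ∑ y1, ∑ y2, ρ x * πref x y1 * πref x y2 = ρ x := by
    intro x
    calc ∑ y1, ∑ y2, ρ x * πref x y1 * πref x y2
        = ∑ y1, ρ x * πref x y1 * ∑ y2, πref x y2 := by
          refine Finset.sum_congr rfl fun y1 _ => ?_
          rw [Finset.mul_sum]
    _ = ρ x := by
          simp only [hπref1 x, mul_one]
          rw [← Finset.mul_sum, hπref1 x, mul_one]
  have hw1 : ∑ x, ∑ y1, ∑ y2, ρ x * πref x y1 * πref x y2 = 1 := by
    rw [← hρ1]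
    exact Finset.sum_congr rfl fun x _ => hw1x x
  have hpsum : ∑ e : X × Y × Y × Bool, p e = 1 := by
    rw [hsumE]
    rw [← hw1]
    refine Finset.sum_congr rfl fun x _ => ?_
    refine Finset.sum_congr rfl fun y1 _ => ?_
    refine Finset.sum_congr rfl fun y2 _ => ?_
    simp only [p, P]
    simp only [if_true, if_false, Bool.false_eq_true, ite_true, ite_false]
    ring

  -- product measure is a probability measure
  have hall : ∑ s : Fin n → X × Y × Y × Bool, ∏ i, p (s i) = 1 := by
    rw [← Fintype.prod_sum]
    simp [hpsum]
  have hprod_nonneg : ∀ s : Fin n → X × Y × Y × Bool, 0 ≤ ∏ i, p (s i) := by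
    intro s
    exact Finset.prod_nonneg fun i _ => hp0 _
  -- general union bound reduction
  have main : ∀ Q : (X → Y → ℝ) → (Fin n → X × Y × Y × Bool) → Prop,
      (∀ f ∈ FF, ∑ s ∈ Finset.univ.filter (fun s => ¬ Q f s), ∏ i, p (s i) ≤ δ / FF.card) →
      1 - δ ≤ ∑ s ∈ Finset.univ.filter (fun s => ∀ f ∈ FF, Q f s), ∏ i, p (s i) := by
    intro Q hQ
    rcases FF.eq_empty_or_nonempty with hFF | hFF
    · have : Finset.univ.filter (fun s : Fin n → X × Y × Y × Bool => ∀ f ∈ FF, Q f s)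
          = Finset.univ := by
        refine Finset.filter_true_of_mem fun s _ => ?_
        intro f hf
        rw [hFF] at hf
        exact absurd hf (Finset.notMem_empty f)
      rw [this, hall]
      linarith
    · have hcardpos : (0:ℝ) < (FF.card : ℝ) := by exact_mod_cast Finset.card_pos.2 hFF
      have hsplit := Finset.sum_filter_add_sum_filter_not
        (Finset.univ : Finset (Fin n → X × Y × Y × Bool))
        (fun s => ∀ f ∈ FF, Q f s) (fun s => ∏ i, p (s i))
      have hbad : ∑ s ∈ Finset.univ.filter (fun s => ¬ ∀ f ∈ FF, Q f s), ∏ i, p (s i) ≤ δ := by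
        calc ∑ s ∈ Finset.univ.filter (fun s => ¬ ∀ f ∈ FF, Q f s), ∏ i, p (s i)
            ≤ ∑ s ∈ Finset.univ.filter (fun s => ¬ ∀ f ∈ FF, Q f s),
                ∑ f ∈ FF, (if ¬ Q f s then ∏ i, p (s i) else 0) := by
              refine Finset.sum_le_sum fun s hs => ?_
              simp only [Finset.mem_filter, Finset.mem_univ, true_and, not_forall] at hs
              obtain ⟨f0, hf0, hng⟩ := hs
              have h1 := Finset.single_le_sum
                (f := fun f => if ¬ Q f s then ∏ i, p (s i) else 0)
                (fun f _ => by split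
                               · exact hprod_nonneg s
                               · exact le_refl 0) hf0
              simp only [if_pos hng] at h1
              exact h1
        _ ≤ ∑ s : Fin n → X × Y × Y × Bool,
                ∑ f ∈ FF, (if ¬ Q f s then ∏ i, p (s i) else 0) := by
              refine Finset.sum_le_sum_of_subset_of_nonneg (Finset.filter_subset _ _)
                fun s _ _ => Finset.sum_nonneg fun f _ => ?_
              split
              · exact hprod_nonneg s
              · exact le_refl 0
        _ = ∑ f ∈ FF, ∑ s : Fin n → X × Y × Y × Bool,
                (if ¬ Q f s then ∏ i, p (s i) else 0) := Finset.sum_comm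
        _ = ∑ f ∈ FF, ∑ s ∈ Finset.univ.filter (fun s => ¬ Q f s), ∏ i, p (s i) := by
              exact Finset.sum_congr rfl fun f _ => (Finset.sum_filter _ _).symm
        _ ≤ ∑ f ∈ FF, δ / FF.card := Finset.sum_le_sum fun f hf => hQ f hf
        _ = δ := by
              rw [Finset.sum_const, nsmul_eq_mul]
              field_simp
      have := hall
      linarith [hsplit, hbad, hall]
  refine main _ ?_
  intro f hf
  -- from here on, FF is nonempty
  have hFF : FF.Nonempty := ⟨f, hf⟩
  have hcardpos : (0:ℝ) < (FF.card : ℝ) := by exact_mod_cast Finset.card_pos.2 hFF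
  have hcard1 : (1:ℝ) ≤ (FF.card : ℝ) := by
    exact_mod_cast Nat.one_le_iff_ne_zero.2 (Finset.card_ne_zero_of_mem hf)
  set t := Real.log ((FF.card : ℝ) / δ) with ht
  have ht0 : 0 ≤ t := Real.log_nonneg (by rw [le_div_iff₀ hδ0]; linarith)
  have hn' : (0:ℝ) < (n:ℝ) := by exact_mod_cast hn
  -- the affinity
  set A : ℝ := ∑ e : X × Y × Y × Bool, p e * Real.sqrt (P f e / P rstar e) with hA
  have hq : ∀ e : X × Y × Y × Bool, p e * Real.sqrt (P f e / P rstar e)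
      = ρ e.1 * πref e.1 e.2.1 * πref e.1 e.2.2.1 * Real.sqrt (P f e * P rstar e) := by
    intro e
    have h1 : 0 < P rstar e := hP0 rstar e
    have h2 : 0 < P f e := hP0 f e
    have h3 : Real.sqrt (P rstar e) ≠ 0 := ne_of_gt (Real.sqrt_pos.2 h1)
    have h4 : Real.sqrt (P rstar e) * Real.sqrt (P rstar e) = P rstar e :=
      Real.mul_self_sqrt h1.le
    rw [Real.sqrt_div h2.le, Real.sqrt_mul h2.le]
    simp only [p]
    field_simp
    linear_combination (-(ρ e.1 * πref e.1 e.2.1 * πref e.1 e.2.2.1)) * h4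
  have hterm_nonneg : ∀ e : X × Y × Y × Bool, 0 ≤ p e * Real.sqrt (P f e / P rstar e) :=
    fun e => mul_nonneg (hp0 e) (Real.sqrt_nonneg _)
  have hA_pos : 0 < A := by
    have h1 : (0:ℝ) < ∑ e : X × Y × Y × Bool, p e := by rw [hpsum]; norm_num
    obtain ⟨e0, -, he0⟩ := Finset.exists_lt_of_sum_lt
      (show ∑ _e : X × Y × Y × Bool, (0:ℝ) < ∑ e : X × Y × Y × Bool, p e by simpa using h1)
    have h2 : 0 < p e0 * Real.sqrt (P f e0 / P rstar e0) :=
      mul_pos he0 (Real.sqrt_pos.2 (div_pos (hP0 f e0) (hP0 rstar e0)))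
    calc (0:ℝ) < p e0 * Real.sqrt (P f e0 / P rstar e0) := h2
    _ ≤ A := Finset.single_le_sum (fun e _ => hterm_nonneg e) (Finset.mem_univ e0)
  -- Hellinger / TV bound : E[TV²] ≤ 2 - 2A
  have hTV : (∑ x, ρ x * ∑ y1, ∑ y2, πref x y1 * πref x y2 *
      (σ (f x y1 - f x y2) - σ (rstar x y1 - rstar x y2)) ^ 2) ≤ 2 - 2 * A := by
    have hAform : A = ∑ x, ∑ y1, ∑ y2, ρ x * πref x y1 * πref x y2 *
        (Real.sqrt (σ (f x y1 - f x y2) * σ (rstar x y1 - rstar x y2))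
          + Real.sqrt ((1 - σ (f x y1 - f x y2)) * (1 - σ (rstar x y1 - rstar x y2)))) := by
      rw [hA, Finset.sum_congr rfl fun e _ => hq e, hsumE]
      refine Finset.sum_congr rfl fun x _ => ?_
      refine Finset.sum_congr rfl fun y1 _ => ?_
      refine Finset.sum_congr rfl fun y2 _ => ?_
      simp only [P]
      norm_num
      ring
    rw [hAform]
    have hLHS : (∑ x, ρ x * ∑ y1, ∑ y2, πref x y1 * πref x y2 *
        (σ (f x y1 - f x y2) - σ (rstar x y1 - rstar x y2)) ^ 2)
        = ∑ x, ∑ y1, ∑ y2, ρ x * πref x y1 * πref x y2 *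
        (σ (f x y1 - f x y2) - σ (rstar x y1 - rstar x y2)) ^ 2 := by
      refine Finset.sum_congr rfl fun x _ => ?_
      rw [Finset.mul_sum]
      refine Finset.sum_congr rfl fun y1 _ => ?_
      rw [Finset.mul_sum]
      refine Finset.sum_congr rfl fun y2 _ => ?_
      ring
    rw [hLHS]
    have hpoint : ∀ x y1 y2, ρ x * πref x y1 * πref x y2 *
        (σ (f x y1 - f x y2) - σ (rstar x y1 - rstar x y2)) ^ 2
        ≤ 2 * (ρ x * πref x y1 * πref x y2)
          - 2 * (ρ x * πref x y1 * πref x y2 *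
            (Real.sqrt (σ (f x y1 - f x y2) * σ (rstar x y1 - rstar x y2))
              + Real.sqrt ((1 - σ (f x y1 - f x y2)) * (1 - σ (rstar x y1 - rstar x y2))))) := by
      intro x y1 y2
      have hw0 : 0 ≤ ρ x * πref x y1 * πref x y2 :=
        mul_nonneg (mul_nonneg (hρ0 x) (hπref0 x y1)) (hπref0 x y2)
      have hk := tv_sq_le_hellinger (σ (f x y1 - f x y2)) (σ (rstar x y1 - rstar x y2))
        (hσ0 _).le (hσ1 _).le (hσ0 _).le (hσ1 _).le
      nlinarith [mul_le_mul_of_nonneg_left hk hw0]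
    calc ∑ x, ∑ y1, ∑ y2, ρ x * πref x y1 * πref x y2 *
        (σ (f x y1 - f x y2) - σ (rstar x y1 - rstar x y2)) ^ 2
        ≤ ∑ x, ∑ y1, ∑ y2, (2 * (ρ x * πref x y1 * πref x y2)
          - 2 * (ρ x * πref x y1 * πref x y2 *
            (Real.sqrt (σ (f x y1 - f x y2) * σ (rstar x y1 - rstar x y2))
              + Real.sqrt ((1 - σ (f x y1 - f x y2)) * (1 - σ (rstar x y1 - rstar x y2)))))) := by
          refine Finset.sum_le_sum fun x _ => Finset.sum_le_sum fun y1 _ =>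
            Finset.sum_le_sum fun y2 _ => hpoint x y1 y2
    _ = 2 - 2 * ∑ x, ∑ y1, ∑ y2, ρ x * πref x y1 * πref x y2 *
          (Real.sqrt (σ (f x y1 - f x y2) * σ (rstar x y1 - rstar x y2))
            + Real.sqrt ((1 - σ (f x y1 - f x y2)) * (1 - σ (rstar x y1 - rstar x y2)))) := by
          have hpull : ∀ (g : X → Y → Y → ℝ) (k : ℝ),
              ∑ x, ∑ y1, ∑ y2, k * g x y1 y2 = k * ∑ x, ∑ y1, ∑ y2, g x y1 y2 := by
            intro g k
            simp only [← Finset.mul_sum]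
          simp only [Finset.sum_sub_distrib]
          rw [hpull (fun x y1 y2 => ρ x * πref x y1 * πref x y2) 2,
            hpull (fun x y1 y2 => ρ x * πref x y1 * πref x y2 *
              (Real.sqrt (σ (f x y1 - f x y2) * σ (rstar x y1 - rstar x y2))
                + Real.sqrt ((1 - σ (f x y1 - f x y2)) * (1 - σ (rstar x y1 - rstar x y2))))) 2,
            hw1]
          ring
  -- Chernoff / Markov bound
  have hmarkov : ∑ s ∈ Finset.univ.filter (fun s : Fin n → X × Y × Y × Bool =>
      Real.exp t * A ^ n ≤ ∏ i, Real.sqrt (P f (s i) / P rstar (s i))), ∏ i, p (s i)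
      ≤ δ / FF.card := by
    set c := Real.exp t * A ^ n with hc
    have hc0 : 0 < c := mul_pos (Real.exp_pos t) (pow_pos hA_pos n)
    calc ∑ s ∈ Finset.univ.filter (fun s : Fin n → X × Y × Y × Bool =>
          c ≤ ∏ i, Real.sqrt (P f (s i) / P rstar (s i))), ∏ i, p (s i)
        ≤ ∑ s ∈ Finset.univ.filter (fun s : Fin n → X × Y × Y × Bool =>
          c ≤ ∏ i, Real.sqrt (P f (s i) / P rstar (s i))),
            (∏ i, p (s i)) * ((∏ i, Real.sqrt (P f (s i) / P rstar (s i))) / c) := by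
          refine Finset.sum_le_sum fun s hs => ?_
          have hs' := (Finset.mem_filter.1 hs).2
          exact le_mul_of_one_le_right (hprod_nonneg s) ((one_le_div hc0).2 hs')
    _ ≤ ∑ s : Fin n → X × Y × Y × Bool,
            (∏ i, p (s i)) * ((∏ i, Real.sqrt (P f (s i) / P rstar (s i))) / c) := by
          refine Finset.sum_le_sum_of_subset_of_nonneg (Finset.filter_subset _ _)
            fun s _ _ => mul_nonneg (hprod_nonneg s)
              (div_nonneg (Finset.prod_nonneg fun i _ => Real.sqrt_nonneg _) hc0.le)
    _ = (∑ s : Fin n → X × Y × Y × Bool,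
            ∏ i, (p (s i) * Real.sqrt (P f (s i) / P rstar (s i)))) / c := by
          rw [Finset.sum_div]
          refine Finset.sum_congr rfl fun s _ => ?_
          conv_rhs => rw [Finset.prod_mul_distrib]
          rw [mul_div_assoc]
    _ = A ^ n / c := by
          have hps := Fintype.prod_sum
            (fun (_ : Fin n) (e : X × Y × Y × Bool) => p e * Real.sqrt (P f e / P rstar e))
          rw [Finset.prod_const, Finset.card_univ, Fintype.card_fin] at hps
          rw [← hps, hA]
    _ = δ / FF.card := by
          rw [hc, ht, Real.exp_log (div_pos hcardpos hδ0)]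
          have hAn : A ^ n ≠ 0 := ne_of_gt (pow_pos hA_pos n)
          field_simp
  -- subset of the Markov event
  refine le_trans (Finset.sum_le_sum_of_subset_of_nonneg ?_ fun s _ _ => hprod_nonneg s) hmarkov
  intro s hs
  simp only [Finset.mem_filter, Finset.mem_univ, true_and] at hs ⊢
  -- hs : ¬ (goal inequality); show exp t * A^n ≤ ∏ √ratio
  by_contra hcon
  push_neg at hcon
  apply hs
  -- from hcon : ∏ √ratio < exp t * A^n, deduce ∑ log(Pf/P*) < 2t + 2n log A
  have hprod_eq : ∏ i, Real.sqrt (P f (s i) / P rstar (s i))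
      = Real.exp ((∑ i, Real.log (P f (s i) / P rstar (s i))) / 2) := by
    rw [Finset.sum_div, Real.exp_sum]
    refine Finset.prod_congr rfl fun i _ => ?_
    have hpos : 0 < P f (s i) / P rstar (s i) := div_pos (hP0 f _) (hP0 rstar _)
    rw [← Real.log_sqrt hpos.le, Real.exp_log (Real.sqrt_pos.2 hpos)]
  have hexp_eq : Real.exp t * A ^ n = Real.exp (t + n * Real.log A) := by
    rw [Real.exp_add, Real.exp_nat_mul, Real.exp_log hA_pos]
  rw [hprod_eq, hexp_eq] at hcon
  have hlt : (∑ i, Real.log (P f (s i) / P rstar (s i))) / 2 < t + n * Real.log A :=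
    (Real.exp_lt_exp).1 hcon
  -- now conclude the target inequality
  have hlogsum : ∑ i, Real.log (P rstar (s i) / P f (s i))
      = - ∑ i, Real.log (P f (s i) / P rstar (s i)) := by
    rw [← Finset.sum_neg_distrib]
    refine Finset.sum_congr rfl fun i _ => ?_
    rw [← Real.log_inv, inv_div]
  rw [hlogsum]
  have key2 : 2 - 2 * A ≤ -2 * Real.log A := by
    have := Real.log_le_sub_one_of_pos hA_pos
    linarith
  have h4 : ((1:ℝ) / n) * (-(2 * t + 2 * n * Real.log A))
      ≤ ((1:ℝ) / n) * (- ∑ i, Real.log (P f (s i) / P rstar (s i))) := by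
    apply mul_le_mul_of_nonneg_left (by linarith) (by positivity)
  have h5 : ((1:ℝ) / n) * (-(2 * t + 2 * n * Real.log A))
      = -(2 / n) * t - 2 * Real.log A := by
    field_simp
    ring
  have h6 : 0 ≤ (2 / (n:ℝ)) * t := by positivity
  have h7 : (4 / (n:ℝ)) * t - (2 / n) * t = (2 / n) * t := by ring
  calc (∑ x, ρ x * ∑ y1, ∑ y2, πref x y1 * πref x y2 *
      (σ (f x y1 - f x y2) - σ (rstar x y1 - rstar x y2)) ^ 2)
      ≤ 2 - 2 * A := hTV
  _ ≤ ((1:ℝ) / n) * (- ∑ i, Real.log (P f (s i) / P rstar (s i))) + ((4:ℝ) / n) * t := by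
      linarith [h4, h5, h6, key2]
end

section
/- Let F be a finite class of functions f: X×Y → ℝ with ||f||_∞ ≤ R for all f ∈ F and r* ∈ F. Let the dataset D = {(x_i, y_i^w, y_i^l)}_{i=1}^n be drawn i.i.d.: x_i ~ ρ, two responses drawn independently from π_ref(·|x_i), with the preferred one y_i^w labeled according to the Bradley–Terry model P(y ≻ y' | x) = σ(r*(x,y) − r*(x,y')). Let f̂ ∈ argmin_{f∈F} E_D(f), where E_D(f) = −(1/n)·Σ_{i=1}^n log σ(f(x_i,y_i^w) − f(x_i,y_i^l)), and let κ = 1/(min_{z∈[−2R,2R]} σ'(z)). Then there is an absolute constant C > 0 such that for any δ ∈ (0,1), with probability at least 1−δ: E_{x~ρ, y1,y2~π_ref(·|x)}[ ( r*(x,y1) − r*(x,y2) − f̂(x,y1) + f̂(x,y2) )² ] ≤ C·(κ²/n)·log(|F|/δ). -/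
open Finset


noncomputable def sig (z : ℝ) : ℝ := 1 / (1 + Real.exp (-z))

lemma one_add_exp_pos (z : ℝ) : 0 < 1 + Real.exp (-z) := by positivity

lemma sig_pos (z : ℝ) : 0 < sig z := by
  unfold sig; positivity

lemma sig_lt_one (z : ℝ) : sig z < 1 := by
  unfold sig
  rw [div_lt_one (one_add_exp_pos z)]
  linarith [Real.exp_pos (-z)]

lemma sig_neg (z : ℝ) : sig (-z) = 1 - sig z := by
  unfold sig
  rw [neg_neg]
  have h1 := (one_add_exp_pos z)
  have h2 := (one_add_exp_pos (-z))
  have hm : Real.exp (-z) * Real.exp z = 1 := by rw [← Real.exp_add]; simp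
  field_simp
  nlinarith [hm]

lemma hasDerivAt_sig (z : ℝ) : HasDerivAt sig (sig z * (1 - sig z)) z := by
  have h1 : HasDerivAt (fun z : ℝ => 1 + Real.exp (-z)) (-Real.exp (-z)) z := by
    simpa using (((Real.hasDerivAt_exp (-z)).comp z (hasDerivAt_neg z)).const_add 1)
  have h2 := h1.inv (ne_of_gt (one_add_exp_pos z))
  have hs : sig = (fun z : ℝ => 1 + Real.exp (-z))⁻¹ := by ext w; simp [sig, one_div]
  have h3 : HasDerivAt sig (- -Real.exp (-z) / (1 + Real.exp (-z)) ^ 2) z := by rw [hs]; exact h2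
  refine h3.congr_deriv ?_
  · have hz := one_add_exp_pos z
    have h1s : 1 - sig z = Real.exp (-z) / (1 + Real.exp (-z)) := by
      unfold sig; field_simp; ring
    rw [h1s]; unfold sig; field_simp

lemma sig_slope_aux {a b m : ℝ} (hab : a ≤ b)
    (hm : ∀ c ∈ Set.Icc a b, m ≤ sig c * (1 - sig c)) :
    m * (b - a) ≤ sig b - sig a := by
  rcases eq_or_lt_of_le hab with rfl | hab'
  · rw [sub_self, mul_zero, sub_self]
  · obtain ⟨c, hc, hc'⟩ := exists_hasDerivAt_eq_slope sig (fun z => sig z * (1 - sig z)) hab'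
      (fun z _ => (hasDerivAt_sig z).continuousAt.continuousWithinAt)
      (fun z _ => hasDerivAt_sig z)
    have hmc : m ≤ sig c * (1 - sig c) := hm c ⟨hc.1.le, hc.2.le⟩
    have : sig b - sig a = (sig c * (1 - sig c)) * (b - a) := by
      rw [eq_div_iff (by linarith : b - a ≠ 0)] at hc'; linarith [hc']
    rw [this]
    have hba : 0 < b - a := by linarith
    nlinarith

lemma sq_hellinger_aux {p q : ℝ} (hp : 0 ≤ p) (hp1 : p ≤ 1) (hq : 0 ≤ q) (hq1 : q ≤ 1) :
    (p - q) ^ 2 ≤ 8 * (1 - (Real.sqrt (p * q) + Real.sqrt ((1 - p) * (1 - q)))) := by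
  have h1 : Real.sqrt (p * q) = Real.sqrt p * Real.sqrt q := Real.sqrt_mul hp q
  have h2 : Real.sqrt ((1 - p) * (1 - q)) = Real.sqrt (1 - p) * Real.sqrt (1 - q) :=
    Real.sqrt_mul (by linarith) _
  rw [h1, h2]
  have e1 : Real.sqrt p ^ 2 = p := Real.sq_sqrt hp
  have e2 : Real.sqrt q ^ 2 = q := Real.sq_sqrt hq
  have e3 : Real.sqrt (1 - p) ^ 2 = 1 - p := Real.sq_sqrt (by linarith)
  have e4 : Real.sqrt (1 - q) ^ 2 = 1 - q := Real.sq_sqrt (by linarith)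
  have b1 : Real.sqrt p ≤ 1 := by nlinarith [Real.sqrt_nonneg p]
  have b2 : Real.sqrt q ≤ 1 := by nlinarith [Real.sqrt_nonneg q]
  nlinarith [sq_nonneg (Real.sqrt p - Real.sqrt q), sq_nonneg (Real.sqrt (1-p) - Real.sqrt (1-q)),
    sq_nonneg (Real.sqrt p + Real.sqrt q), Real.sqrt_nonneg p, Real.sqrt_nonneg q,
    sq_nonneg ((Real.sqrt p - Real.sqrt q) * (Real.sqrt p + Real.sqrt q)),
    mul_nonneg (Real.sqrt_nonneg (1-p)) (Real.sqrt_nonneg (1-q))]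

lemma sig_abs_lower {a b c m : ℝ} (ha : a ∈ Set.Icc (-c) c) (hb : b ∈ Set.Icc (-c) c)
    (hm0 : 0 ≤ m) (hm : ∀ z ∈ Set.Icc (-c) c, m ≤ sig z * (1 - sig z)) :
    m * |a - b| ≤ |sig a - sig b| := by
  rcases le_total a b with h | h
  · have key := sig_slope_aux h (fun z hz => hm z ⟨le_trans ha.1 hz.1, le_trans hz.2 hb.2⟩)
    rw [abs_sub_comm a b, abs_of_nonneg (by linarith), abs_sub_comm (sig a), abs_of_nonneg (by nlinarith)]
    linarith
  · have key := sig_slope_aux h (fun z hz => hm z ⟨le_trans hb.1 hz.1, le_trans hz.2 ha.2⟩)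
    rw [abs_of_nonneg (by linarith), abs_of_nonneg (by nlinarith)]
    linarith

lemma key_pointwise {a b c m : ℝ} (ha : a ∈ Set.Icc (-c) c) (hb : b ∈ Set.Icc (-c) c)
    (hm0 : 0 < m) (hm : ∀ z ∈ Set.Icc (-c) c, m ≤ sig z * (1 - sig z)) :
    (a - b) ^ 2 ≤ 8 * (1 / m) ^ 2 *
      (1 - (Real.sqrt (sig a * sig b) + Real.sqrt ((1 - sig a) * (1 - sig b)))) := by
  have h1 := sig_abs_lower ha hb hm0.le hm
  have h2 : (m * |a - b|) ^ 2 ≤ |sig a - sig b| ^ 2 := pow_le_pow_left₀ (by positivity) h1 2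
  rw [mul_pow, sq_abs, sq_abs] at h2
  have h3 := sq_hellinger_aux (sig_pos a).le (sig_lt_one a).le (sig_pos b).le (sig_lt_one b).le
  have hminv : 0 < (1/m)^2 := by positivity
  have : (a - b)^2 ≤ (1/m)^2 * (sig a - sig b)^2 := by
    rw [show (1/m)^2 * (sig a - sig b)^2 = (sig a - sig b)^2 / m^2 by ring,
      le_div_iff₀ (by positivity)]
    nlinarith
  calc (a-b)^2 ≤ (1/m)^2 * (sig a - sig b)^2 := this
    _ ≤ (1/m)^2 * (8 * (1 - (Real.sqrt (sig a * sig b) + Real.sqrt ((1 - sig a) * (1 - sig b))))) := by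
        exact mul_le_mul_of_nonneg_left h3 hminv.le
    _ = 8 * (1/m)^2 * _ := by ring

lemma sInf_sig_deriv_pos {c : ℝ} (hc : 0 ≤ c) :
    0 < sInf ((fun z => sig z * (1 - sig z)) '' Set.Icc (-c) c) ∧
    ∀ z ∈ Set.Icc (-c) c,
      sInf ((fun z => sig z * (1 - sig z)) '' Set.Icc (-c) c) ≤ sig z * (1 - sig z) := by
  have hne : (Set.Icc (-c) c).Nonempty := ⟨0, by constructor <;> linarith⟩
  have hcont : Continuous fun z : ℝ => sig z * (1 - sig z) := by
    have : Continuous sig := by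
      apply Continuous.div continuous_const
      · exact continuous_const.add (Real.continuous_exp.comp continuous_neg)
      · intro z; exact ne_of_gt (one_add_exp_pos z)
    exact this.mul (continuous_const.sub this)
  have hK : IsCompact ((fun z => sig z * (1 - sig z)) '' Set.Icc (-c) c) :=
    (isCompact_Icc).image hcont
  have hKne : ((fun z => sig z * (1 - sig z)) '' Set.Icc (-c) c).Nonempty := hne.image _
  have hmem := hK.sInf_mem hKne
  obtain ⟨z0, hz0, hz0'⟩ := hmem
  constructor
  · rw [← hz0']
    show 0 < sig z0 * (1 - sig z0)
    nlinarith [sig_pos z0, sig_lt_one z0]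
  · intro z hz
    exact csInf_le hK.bddBelow ⟨z, hz, rfl⟩

lemma sqrt_amgm {x y : ℝ} (hx : 0 ≤ x) (hy : 0 ≤ y) : Real.sqrt (x * y) ≤ (x + y) / 2 := by
  rw [Real.sqrt_mul hx]
  nlinarith [Real.sq_sqrt hx, Real.sq_sqrt hy, sq_nonneg (Real.sqrt x - Real.sqrt y),
    Real.sqrt_nonneg x, Real.sqrt_nonneg y]

lemma prod_sqrt {ι : Type*} (s : Finset ι) (g : ι → ℝ) (h : ∀ i ∈ s, 0 ≤ g i) :
    Real.sqrt (∏ i ∈ s, g i) = ∏ i ∈ s, Real.sqrt (g i) := by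
  induction s using Finset.cons_induction with
  | empty => simp
  | cons a s ha ih =>
    rw [Finset.prod_cons, Finset.prod_cons, Real.sqrt_mul (h a (Finset.mem_cons_self a s)),
      ih (fun i hi => h i (Finset.mem_cons_of_mem hi))]

lemma sum4 {X Y : Type} [Fintype X] [Fintype Y] (g : X × Y × Y × Bool → ℝ) :
    ∑ e : X × Y × Y × Bool, g e
      = ∑ x, ∑ y1, ∑ y2, (g (x, y1, y2, true) + g (x, y1, y2, false)) := by
  simp [Fintype.sum_prod_type]

lemma triple_bound {X Y : Type} [Fintype X] [Fintype Y]
    (B L w : X → Y → Y → ℝ) (K : ℝ) (hK : 0 ≤ K)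
    (hB : ∀ x y1 y2, 0 ≤ B x y1 y2)
    (hsum : ∑ x, ∑ y1, ∑ y2, B x y1 y2 = 1)
    (hpt : ∀ x y1 y2, L x y1 y2 ≤ K * (1 - w x y1 y2)) :
    ∑ x, ∑ y1, ∑ y2, B x y1 y2 * L x y1 y2
      ≤ K * (1 - ∑ x, ∑ y1, ∑ y2, B x y1 y2 * w x y1 y2) := by
  have h1 : ∑ x, ∑ y1, ∑ y2, B x y1 y2 * L x y1 y2
      ≤ ∑ x, ∑ y1, ∑ y2, B x y1 y2 * (K * (1 - w x y1 y2)) :=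
    Finset.sum_le_sum fun x _ => Finset.sum_le_sum fun y1 _ => Finset.sum_le_sum fun y2 _ =>
      mul_le_mul_of_nonneg_left (hpt x y1 y2) (hB x y1 y2)
  refine h1.trans_eq ?_
  have h2 : ∀ x y1 y2, B x y1 y2 * (K * (1 - w x y1 y2))
      = K * (B x y1 y2 - B x y1 y2 * w x y1 y2) := by intros; ring
  simp only [h2]
  simp only [← Finset.mul_sum]
  congr 1
  simp only [Finset.sum_sub_distrib]
  rw [hsum]

open scoped Classical in
/-- (Lemma "MLE") There is an absolute constant `C > 0` such
that for any finite function class `F` with `‖f‖_∞ ≤ R` and `r* ∈ F`, i.i.d.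
Bradley–Terry preference data (samples in `X × Y × Y × Bool`, `Bool` encoding
which response is preferred: the winner is `y` if the label is `true`, else `y'`),
any empirical-NLL minimizer `f̂ ∈ argmin_{f∈F} E_D(f)`, and
`κ = 1/(min_{z∈[−2R,2R]} σ'(z))` with `σ'(z) = σ(z)(1−σ(z))`, for any `δ ∈ (0,1)`,
with probability at least `1−δ`:
`E_{x~ρ, y1,y2~π_ref}[(r*(x,y1) − r*(x,y2) − f̂(x,y1) + f̂(x,y2))²]
   ≤ C·(κ²/n)·log(|F|/δ)`. -/
theorem mle_estimation_error : ∃ C : ℝ, 0 < C ∧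
    ∀ (X Y : Type) [Fintype X] [Fintype Y]
      (ρ : X → ℝ) (πref : X → Y → ℝ) (rstar : X → Y → ℝ)
      (FF : Finset (X → Y → ℝ)) (R : ℝ) (n : ℕ) (δ : ℝ)
      (fhat : (Fin n → X × Y × Y × Bool) → X → Y → ℝ),
      (∀ x, 0 ≤ ρ x) → (∑ x, ρ x) = 1 →
      (∀ x y, 0 ≤ πref x y) → (∀ x, ∑ y, πref x y = 1) →
      rstar ∈ FF → (∀ f ∈ FF, ∀ x y, |f x y| ≤ R) →
      (∀ x y, |rstar x y| ≤ R) →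
      0 < n → 0 < δ → δ < 1 →
      let σ : ℝ → ℝ := fun z => 1 / (1 + Real.exp (-z));
      let κ : ℝ := 1 / sInf ((fun z => σ z * (1 - σ z)) '' Set.Icc (-(2 * R)) (2 * R));
      let yw : X × Y × Y × Bool → Y := fun e => if e.2.2.2 then e.2.1 else e.2.2.1;
      let yl : X × Y × Y × Bool → Y := fun e => if e.2.2.2 then e.2.2.1 else e.2.1;
      let ED : (X → Y → ℝ) → (Fin n → X × Y × Y × Bool) → ℝ := fun f s =>
        -((1 : ℝ) / n) * ∑ i, Real.log (σ (f (s i).1 (yw (s i)) - f (s i).1 (yl (s i))));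
      let p : X × Y × Y × Bool → ℝ := fun e =>
        ρ e.1 * πref e.1 e.2.1 * πref e.1 e.2.2.1 *
          (if e.2.2.2 then σ (rstar e.1 e.2.1 - rstar e.1 e.2.2.1)
           else 1 - σ (rstar e.1 e.2.1 - rstar e.1 e.2.2.1));
      (∀ s, fhat s ∈ FF ∧ ∀ f ∈ FF, ED (fhat s) s ≤ ED f s) →
      1 - δ ≤ ∑ s ∈ Finset.univ.filter (fun s : Fin n → X × Y × Y × Bool =>
          ∑ x, ρ x * ∑ y1, ∑ y2, πref x y1 * πref x y2 *
              (rstar x y1 - rstar x y2 - fhat s x y1 + fhat s x y2) ^ 2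
            ≤ C * (κ ^ 2 / n) * Real.log (FF.card / δ)),
        ∏ i, p (s i) := by
  classical
  refine ⟨8, by norm_num, ?_⟩
  intro X Y _ _ ρ πref rstar FF R n δ fhat hρ0 hρ1 hπ0 hπ1 hrFF hFb hrR hn hδ0 hδ1
  intro σ κ yw yl ED p hmin
  have hX : Nonempty X := by
    rcases isEmpty_or_nonempty X with h | h
    · rw [Finset.univ_eq_empty, Finset.sum_empty] at hρ1; norm_num at hρ1
    · exact h
  have hY : Nonempty Y := by
    rcases isEmpty_or_nonempty Y with h | h
    · have := hπ1 (Classical.arbitrary X)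
      rw [Finset.univ_eq_empty, Finset.sum_empty] at this; norm_num at this
    · exact h
  have hR : 0 ≤ R :=
    le_trans (abs_nonneg _) (hrR (Classical.arbitrary X) (Classical.arbitrary Y))
  -- the minimum of σ' and κ
  obtain ⟨hm0, hmle⟩ := sInf_sig_deriv_pos (by linarith : (0:ℝ) ≤ 2 * R)
  set m : ℝ := sInf ((fun z => sig z * (1 - sig z)) '' Set.Icc (-(2 * R)) (2 * R)) with hm_def
  have hκ : κ = 1 / m := rfl
  have hκ0 : 0 < κ := by rw [hκ]; positivity
  -- basic notation
  set cond : (X → Y → ℝ) → X × Y × Y × Bool → ℝ := fun f e =>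
    if e.2.2.2 then sig (f e.1 e.2.1 - f e.1 e.2.2.1)
    else 1 - sig (f e.1 e.2.1 - f e.1 e.2.2.1) with hcond_def
  set pfun : (X → Y → ℝ) → X × Y × Y × Bool → ℝ := fun f e =>
    ρ e.1 * πref e.1 e.2.1 * πref e.1 e.2.2.1 * cond f e with hpf_def
  have hp_eq : p = pfun rstar := rfl
  set γ : (X → Y → ℝ) → ℝ := fun f => ∑ e, Real.sqrt (pfun rstar e * pfun f e) with hγ_def
  have hcond_pos : ∀ f e, 0 < cond f e := by
    intro f e; rcases e with ⟨x, y1, y2, b⟩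
    cases b
    · simpa [hcond_def] using
        (by linarith [sig_lt_one (f x y1 - f x y2)] : (0:ℝ) < 1 - sig (f x y1 - f x y2))
    · simpa [hcond_def] using sig_pos (f x y1 - f x y2)
  have hbase0 : ∀ x y1 y2, 0 ≤ ρ x * πref x y1 * πref x y2 := fun x y1 y2 =>
    mul_nonneg (mul_nonneg (hρ0 x) (hπ0 x y1)) (hπ0 x y2)
  have hpf0 : ∀ f e, 0 ≤ pfun f e := by
    intro f e
    exact mul_nonneg (hbase0 e.1 e.2.1 e.2.2.1) (hcond_pos f e).le
  have hbase3 : ∑ x, ∑ y1, ∑ y2, ρ x * πref x y1 * πref x y2 = 1 := by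
    have h1 : ∀ x, ∑ y1, ∑ y2, ρ x * πref x y1 * πref x y2 = ρ x := by
      intro x
      have h2 : ∀ y1, ∑ y2, ρ x * πref x y1 * πref x y2 = ρ x * πref x y1 := by
        intro y1; rw [← Finset.mul_sum, hπ1 x, mul_one]
      rw [Finset.sum_congr rfl (fun y1 _ => h2 y1), ← Finset.mul_sum, hπ1 x, mul_one]
    rw [Finset.sum_congr rfl (fun x _ => h1 x), hρ1]
  have hpf_sum : ∀ f, ∑ e, pfun f e = 1 := by
    intro f
    rw [sum4 (pfun f)]
    have h1 : ∀ x y1 y2, pfun f (x, y1, y2, true) + pfun f (x, y1, y2, false)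
        = ρ x * πref x y1 * πref x y2 := by
      intro x y1 y2
      simp only [hpf_def, hcond_def, reduceIte, Bool.false_eq_true, if_false, if_true]
      ring
    rw [Finset.sum_congr rfl fun x _ => Finset.sum_congr rfl fun y1 _ =>
      Finset.sum_congr rfl fun y2 _ => h1 x y1 y2]
    exact hbase3
  -- expression for γ
  have hγ_eq : ∀ f, γ f = ∑ x, ∑ y1, ∑ y2, ρ x * πref x y1 * πref x y2 *
      (Real.sqrt (sig (rstar x y1 - rstar x y2) * sig (f x y1 - f x y2)) +
       Real.sqrt ((1 - sig (rstar x y1 - rstar x y2)) * (1 - sig (f x y1 - f x y2)))) := by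
    intro f
    rw [hγ_def]
    show (∑ e : X × Y × Y × Bool, Real.sqrt (pfun rstar e * pfun f e)) = _
    rw [sum4 (fun e => Real.sqrt (pfun rstar e * pfun f e))]
    refine Finset.sum_congr rfl fun x _ => Finset.sum_congr rfl fun y1 _ =>
      Finset.sum_congr rfl fun y2 _ => ?_
    have hB := hbase0 x y1 y2
    simp only [hpf_def, hcond_def, reduceIte, Bool.false_eq_true, if_false, if_true]
    rw [show ρ x * πref x y1 * πref x y2 * sig (rstar x y1 - rstar x y2) *
          (ρ x * πref x y1 * πref x y2 * sig (f x y1 - f x y2))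
        = (ρ x * πref x y1 * πref x y2) ^ 2 *
          (sig (rstar x y1 - rstar x y2) * sig (f x y1 - f x y2)) from by ring,
      show ρ x * πref x y1 * πref x y2 * (1 - sig (rstar x y1 - rstar x y2)) *
          (ρ x * πref x y1 * πref x y2 * (1 - sig (f x y1 - f x y2)))
        = (ρ x * πref x y1 * πref x y2) ^ 2 *
          ((1 - sig (rstar x y1 - rstar x y2)) * (1 - sig (f x y1 - f x y2))) from by ring,
      Real.sqrt_mul (sq_nonneg _), Real.sqrt_mul (sq_nonneg _), Real.sqrt_sq hB]
    ring
  -- squared error vs Hellinger bound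
  have hIcc : ∀ g : X → Y → ℝ, (∀ x y, |g x y| ≤ R) → ∀ x y1 y2,
      g x y1 - g x y2 ∈ Set.Icc (-(2 * R)) (2 * R) := by
    intro g hg x y1 y2
    have h1 := abs_le.mp (hg x y1); have h2 := abs_le.mp (hg x y2)
    exact Set.mem_Icc.mpr ⟨by linarith [h1.1, h2.2], by linarith [h1.2, h2.1]⟩
  have hLb : ∀ f ∈ FF,
      (∑ x, ρ x * ∑ y1, ∑ y2, πref x y1 * πref x y2 *
        (rstar x y1 - rstar x y2 - f x y1 + f x y2) ^ 2)
      ≤ 8 * (1 / m) ^ 2 * (1 - γ f) := by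
    intro f hf
    have hstep : (∑ x, ρ x * ∑ y1, ∑ y2, πref x y1 * πref x y2 *
          (rstar x y1 - rstar x y2 - f x y1 + f x y2) ^ 2)
        = ∑ x, ∑ y1, ∑ y2, ρ x * πref x y1 * πref x y2 *
            ((rstar x y1 - rstar x y2 - f x y1 + f x y2) ^ 2) := by
      simp only [Finset.mul_sum]
      exact Finset.sum_congr rfl fun x _ => Finset.sum_congr rfl fun y1 _ =>
        Finset.sum_congr rfl fun y2 _ => by ring
    rw [hstep, hγ_eq f]
    exact triple_bound (fun x y1 y2 => ρ x * πref x y1 * πref x y2)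
      (fun x y1 y2 => (rstar x y1 - rstar x y2 - f x y1 + f x y2) ^ 2)
      (fun x y1 y2 => Real.sqrt (sig (rstar x y1 - rstar x y2) * sig (f x y1 - f x y2)) +
        Real.sqrt ((1 - sig (rstar x y1 - rstar x y2)) * (1 - sig (f x y1 - f x y2))))
      (8 * (1 / m) ^ 2) (by positivity) hbase0 hbase3
      (fun x y1 y2 => by
        have key := key_pointwise (hIcc rstar hrR x y1 y2) (hIcc f (hFb f hf) x y1 y2) hm0 hmle
        calc (rstar x y1 - rstar x y2 - f x y1 + f x y2) ^ 2
            = ((rstar x y1 - rstar x y2) - (f x y1 - f x y2)) ^ 2 := by ring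
          _ ≤ _ := key)
  -- product measure identity
  have hprodsum : ∀ g : X × Y × Y × Bool → ℝ,
      ∑ s : Fin n → X × Y × Y × Bool, ∏ i, g (s i) = (∑ e, g e) ^ n := by
    intro g
    rw [← Fintype.piFinset_univ, Finset.sum_prod_piFinset]
    simp
  -- the empirical minimizer beats rstar in likelihood
  have hcond_eq : ∀ (f : X → Y → ℝ) (e : X × Y × Y × Bool),
      σ (f e.1 (yw e) - f e.1 (yl e)) = cond f e := by
    intro f e; rcases e with ⟨x, y1, y2, b⟩
    cases b
    · show sig (f x y2 - f x y1) = _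
      simp only [hcond_def, Bool.false_eq_true, if_false]
      rw [show f x y2 - f x y1 = -(f x y1 - f x y2) from by ring, sig_neg]
    · show sig (f x y1 - f x y2) = _
      simp [hcond_def]
  have hprod_ineq : ∀ s, ∏ i, pfun rstar (s i) ≤ ∏ i, pfun (fhat s) (s i) := by
    intro s
    have hED : ∀ f : X → Y → ℝ, ED f s = -((1 : ℝ) / n) * ∑ i, Real.log (cond f (s i)) := by
      intro f
      show -((1 : ℝ) / n) * ∑ i, Real.log (σ (f (s i).1 (yw (s i)) - f (s i).1 (yl (s i)))) = _
      rw [Finset.sum_congr rfl fun i _ => by rw [hcond_eq f (s i)]]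
    have h1 := (hmin s).2 rstar hrFF
    rw [hED, hED] at h1
    have hn' : (0 : ℝ) < 1 / n := by positivity
    have h2 : ∑ i, Real.log (cond rstar (s i)) ≤ ∑ i, Real.log (cond (fhat s) (s i)) := by
      rw [neg_mul, neg_mul, neg_le_neg_iff] at h1
      exact (mul_le_mul_iff_right₀ hn').mp h1
    have h3 : ∀ f : X → Y → ℝ, ∏ i, cond f (s i)
        = Real.exp (∑ i, Real.log (cond f (s i))) := by
      intro f
      rw [Real.exp_sum]
      exact Finset.prod_congr rfl fun i _ => (Real.exp_log (hcond_pos f (s i))).symm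
    have h4 : ∏ i, cond rstar (s i) ≤ ∏ i, cond (fhat s) (s i) := by
      rw [h3, h3]; exact Real.exp_le_exp.mpr h2
    have h5 : ∀ f : X → Y → ℝ, ∏ i, pfun f (s i) =
        (∏ i, ρ (s i).1 * πref (s i).1 (s i).2.1 * πref (s i).1 (s i).2.2.1) *
          ∏ i, cond f (s i) := by
      intro f
      rw [← Finset.prod_mul_distrib]
    have hBn : 0 ≤ ∏ i, ρ (s i).1 * πref (s i).1 (s i).2.1 * πref (s i).1 (s i).2.2.1 :=
      Finset.prod_nonneg fun i _ => hbase0 _ _ _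
    rw [h5, h5]
    exact mul_le_mul_of_nonneg_left h4 hBn
  -- facts about γ
  have hγ0 : ∀ f, 0 ≤ γ f := fun f => Finset.sum_nonneg fun e _ => Real.sqrt_nonneg _
  have hγ1 : ∀ f, γ f ≤ 1 := by
    intro f
    have hs : γ f ≤ ∑ e, (pfun rstar e + pfun f e) / 2 :=
      Finset.sum_le_sum fun e _ => sqrt_amgm (hpf0 rstar e) (hpf0 f e)
    calc γ f ≤ ∑ e, (pfun rstar e + pfun f e) / 2 := hs
      _ = 1 := by
        rw [← Finset.sum_div, Finset.sum_add_distrib, hpf_sum rstar, hpf_sum f]; norm_num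
  -- the threshold
  set t : ℝ := Real.log (FF.card / δ) / n with ht_def
  have hcard : 0 < FF.card := Finset.card_pos.mpr ⟨rstar, hrFF⟩
  have hcardR : (0 : ℝ) < FF.card := by exact_mod_cast hcard
  have hexp : Real.exp (-t) ^ n = δ / FF.card := by
    rw [← Real.exp_nat_mul]
    have hne : (n : ℝ) ≠ 0 := by positivity
    rw [show (n : ℝ) * -t = -Real.log (FF.card / δ) from by rw [ht_def]; field_simp]
    rw [Real.exp_neg, Real.exp_log (div_pos hcardR hδ0), inv_div]
  -- per-function bad-event bound
  have hBadf : ∀ f, t < 1 - γ f →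
      (∑ s ∈ Finset.univ.filter (fun s : Fin n → X × Y × Y × Bool =>
          ∏ i, pfun rstar (s i) ≤ ∏ i, pfun f (s i)), ∏ i, pfun rstar (s i))
        ≤ δ / FF.card := by
    intro f hγt
    have step1 : ∀ s ∈ Finset.univ.filter (fun s : Fin n → X × Y × Y × Bool =>
        ∏ i, pfun rstar (s i) ≤ ∏ i, pfun f (s i)),
        ∏ i, pfun rstar (s i) ≤ ∏ i, Real.sqrt (pfun rstar (s i) * pfun f (s i)) := by
      intro s hs
      have hle := (Finset.mem_filter.mp hs).2
      have e1 : ∏ i, Real.sqrt (pfun rstar (s i) * pfun f (s i))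
          = Real.sqrt ((∏ i, pfun rstar (s i)) * ∏ i, pfun f (s i)) := by
        rw [← Finset.prod_mul_distrib,
          prod_sqrt _ _ (fun i _ => mul_nonneg (hpf0 _ _) (hpf0 _ _))]
      rw [e1]
      have h0 : 0 ≤ ∏ i, pfun rstar (s i) := Finset.prod_nonneg fun i _ => hpf0 _ _
      calc ∏ i, pfun rstar (s i)
          = Real.sqrt ((∏ i, pfun rstar (s i)) * ∏ i, pfun rstar (s i)) :=
            (Real.sqrt_mul_self h0).symm
        _ ≤ _ := Real.sqrt_le_sqrt (by nlinarith)
    calc (∑ s ∈ Finset.univ.filter (fun s : Fin n → X × Y × Y × Bool =>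
            ∏ i, pfun rstar (s i) ≤ ∏ i, pfun f (s i)), ∏ i, pfun rstar (s i))
        ≤ ∑ s ∈ Finset.univ.filter (fun s : Fin n → X × Y × Y × Bool =>
            ∏ i, pfun rstar (s i) ≤ ∏ i, pfun f (s i)),
            ∏ i, Real.sqrt (pfun rstar (s i) * pfun f (s i)) := Finset.sum_le_sum step1
      _ ≤ ∑ s : Fin n → X × Y × Y × Bool, ∏ i, Real.sqrt (pfun rstar (s i) * pfun f (s i)) :=
          Finset.sum_le_sum_of_subset_of_nonneg (Finset.filter_subset _ _)
            (fun s _ _ => Finset.prod_nonneg fun i _ => Real.sqrt_nonneg _)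
      _ = (∑ e, Real.sqrt (pfun rstar e * pfun f e)) ^ n := hprodsum (fun e => Real.sqrt (pfun rstar e * pfun f e))
      _ = γ f ^ n := rfl
      _ ≤ Real.exp (-t) ^ n := by
          refine pow_le_pow_left₀ (hγ0 f) ?_ n
          nlinarith [Real.add_one_le_exp (-t)]
      _ = δ / FF.card := hexp
  -- union bound over the bad class
  have hbad_le : (∑ s ∈ Finset.univ.filter (fun s : Fin n → X × Y × Y × Bool =>
      ¬ ((∑ x, ρ x * ∑ y1, ∑ y2, πref x y1 * πref x y2 *
            (rstar x y1 - rstar x y2 - fhat s x y1 + fhat s x y2) ^ 2)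
          ≤ 8 * (κ ^ 2 / n) * Real.log (FF.card / δ))),
      ∏ i, pfun rstar (s i)) ≤ δ := by
    have hcover : ∀ s : Fin n → X × Y × Y × Bool,
        ¬ ((∑ x, ρ x * ∑ y1, ∑ y2, πref x y1 * πref x y2 *
            (rstar x y1 - rstar x y2 - fhat s x y1 + fhat s x y2) ^ 2)
          ≤ 8 * (κ ^ 2 / n) * Real.log (FF.card / δ)) →
        fhat s ∈ FF.filter (fun f => t < 1 - γ f) := by
      intro s hPs
      refine Finset.mem_filter.mpr ⟨(hmin s).1, ?_⟩
      by_contra hcon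
      push_neg at hcon
      apply hPs
      have hL := hLb (fhat s) (hmin s).1
      have h6 : 8 * (1 / m) ^ 2 * (1 - γ (fhat s)) ≤ 8 * (1 / m) ^ 2 * t :=
        mul_le_mul_of_nonneg_left hcon (by positivity)
      calc (∑ x, ρ x * ∑ y1, ∑ y2, πref x y1 * πref x y2 *
            (rstar x y1 - rstar x y2 - fhat s x y1 + fhat s x y2) ^ 2)
          ≤ 8 * (1 / m) ^ 2 * (1 - γ (fhat s)) := hL
        _ ≤ 8 * (1 / m) ^ 2 * t := h6
        _ = 8 * (κ ^ 2 / n) * Real.log (FF.card / δ) := by rw [hκ, ht_def]; ring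
    have hite0 : ∀ (s : Fin n → X × Y × Y × Bool) (f : X → Y → ℝ),
        0 ≤ (if ∏ i, pfun rstar (s i) ≤ ∏ i, pfun f (s i)
             then ∏ i, pfun rstar (s i) else 0) := by
      intro s f
      split_ifs
      · exact Finset.prod_nonneg fun i _ => hpf0 _ _
      · exact le_rfl
    calc (∑ s ∈ Finset.univ.filter (fun s : Fin n → X × Y × Y × Bool =>
            ¬ ((∑ x, ρ x * ∑ y1, ∑ y2, πref x y1 * πref x y2 *
                (rstar x y1 - rstar x y2 - fhat s x y1 + fhat s x y2) ^ 2)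
              ≤ 8 * (κ ^ 2 / n) * Real.log (FF.card / δ))), ∏ i, pfun rstar (s i))
        ≤ ∑ s ∈ Finset.univ.filter (fun s : Fin n → X × Y × Y × Bool =>
            ¬ ((∑ x, ρ x * ∑ y1, ∑ y2, πref x y1 * πref x y2 *
                (rstar x y1 - rstar x y2 - fhat s x y1 + fhat s x y2) ^ 2)
              ≤ 8 * (κ ^ 2 / n) * Real.log (FF.card / δ))),
            ∑ f ∈ FF.filter (fun f => t < 1 - γ f),
              (if ∏ i, pfun rstar (s i) ≤ ∏ i, pfun f (s i)
               then ∏ i, pfun rstar (s i) else 0) := by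
          refine Finset.sum_le_sum fun s hs => ?_
          have hf1 := hcover s (Finset.mem_filter.mp hs).2
          have hsingle := Finset.single_le_sum
            (f := fun f => if ∏ i, pfun rstar (s i) ≤ ∏ i, pfun f (s i)
              then ∏ i, pfun rstar (s i) else 0)
            (fun f _ => hite0 s f) hf1
          simpa [if_pos (hprod_ineq s)] using hsingle
      _ ≤ ∑ s : Fin n → X × Y × Y × Bool,
            ∑ f ∈ FF.filter (fun f => t < 1 - γ f),
              (if ∏ i, pfun rstar (s i) ≤ ∏ i, pfun f (s i)
               then ∏ i, pfun rstar (s i) else 0) :=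
          Finset.sum_le_sum_of_subset_of_nonneg (Finset.filter_subset _ _)
            (fun s _ _ => Finset.sum_nonneg fun f _ => hite0 s f)
      _ = ∑ f ∈ FF.filter (fun f => t < 1 - γ f),
            ∑ s : Fin n → X × Y × Y × Bool,
              (if ∏ i, pfun rstar (s i) ≤ ∏ i, pfun f (s i)
               then ∏ i, pfun rstar (s i) else 0) := Finset.sum_comm
      _ = ∑ f ∈ FF.filter (fun f => t < 1 - γ f),
            ∑ s ∈ Finset.univ.filter (fun s : Fin n → X × Y × Y × Bool =>
              ∏ i, pfun rstar (s i) ≤ ∏ i, pfun f (s i)), ∏ i, pfun rstar (s i) :=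
          Finset.sum_congr rfl fun f _ => (Finset.sum_filter _ _).symm
      _ ≤ ∑ f ∈ FF.filter (fun f => t < 1 - γ f), δ / FF.card :=
          Finset.sum_le_sum fun f hf => hBadf f (Finset.mem_filter.mp hf).2
      _ = (FF.filter (fun f => t < 1 - γ f)).card * (δ / FF.card) := by
          rw [Finset.sum_const, nsmul_eq_mul]
      _ ≤ FF.card * (δ / FF.card) := by
          have hle : ((FF.filter (fun f => t < 1 - γ f)).card : ℝ) ≤ FF.card := by
            exact_mod_cast Finset.card_le_card (Finset.filter_subset _ _)
          exact mul_le_mul_of_nonneg_right hle (le_of_lt (div_pos hδ0 hcardR))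
      _ = δ := by field_simp
  -- conclusion
  have hsplit := Finset.sum_filter_add_sum_filter_not Finset.univ
    (fun s : Fin n → X × Y × Y × Bool =>
      (∑ x, ρ x * ∑ y1, ∑ y2, πref x y1 * πref x y2 *
          (rstar x y1 - rstar x y2 - fhat s x y1 + fhat s x y2) ^ 2)
        ≤ 8 * (κ ^ 2 / n) * Real.log (FF.card / δ))
    (fun s => ∏ i, p (s i))
  have htot : ∑ s : Fin n → X × Y × Y × Bool, ∏ i, p (s i) = 1 := by
    rw [hp_eq, hprodsum (pfun rstar), hpf_sum rstar, one_pow]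
  have hb : (∑ s ∈ Finset.univ.filter (fun s : Fin n → X × Y × Y × Bool =>
      ¬ ((∑ x, ρ x * ∑ y1, ∑ y2, πref x y1 * πref x y2 *
            (rstar x y1 - rstar x y2 - fhat s x y1 + fhat s x y2) ^ 2)
          ≤ 8 * (κ ^ 2 / n) * Real.log (FF.card / δ))),
      ∏ i, p (s i)) ≤ δ := by
    rw [hp_eq]; exact hbad_le
  linarith [hsplit, htot, hb]
end
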